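/- arXiv:1202.3064 — 2 statements merged into one kernel-verified Lean document; each statement's English description precedes it below -/
import Mathlib

section
/- Let n ≥ 4 and let 1 ≥ λ₂ ≥ ... ≥ λₙ ≥ −1 be real numbers with 1 + λ₂ + ... + λₙ ≥ 0. Set S = 1/n + Σ_{j=2}^{n−2} λ_j/((n−j+2)(n−j+1)) (so that the coefficient of λ₂ is 1/(n(n−1)), of λ₃ is 1/((n−1)(n−2)), ..., of λ_{n−2} is 1/12). If both S − 2λ_{n−1}/3 + λₙ/3 ≥ 0 and S + 2λₙ/3 ≥ 0 hold, then there exists an n×n doubly stochastic matrix whose eigenvalues, counted with algebraic multiplicity, are 1, λ₂, ..., λₙ. -/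
open Matrix Polynomial

/-- A real square matrix is doubly stochastic if its entries are nonnegative and all of its
row sums and column sums are equal to `1`. -/
def DoublyStochastic {n : ℕ} (D : Matrix (Fin n) (Fin n) ℝ) : Prop :=
  (∀ i j, 0 ≤ D i j) ∧ (∀ i, ∑ j, D i j = 1) ∧ (∀ j, ∑ i, D i j = 1)

/-- The quantity `S = 1/n + ∑_{j=2}^{n-2} λⱼ/((n-j+2)(n-j+1))`. -/
noncomputable def Squant (n : ℕ) (L : ℕ → ℝ) : ℝ :=
  1 / (n : ℝ) + ∑ j ∈ Finset.Icc 2 (n - 2), L j / (((n - j + 2) * (n - j + 1) : ℕ) : ℝ)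

namespace RdiepAux

open Finset

/-- Entry of the Soules-type eigenvector matrix: row `b`, column `a` (as naturals). -/
noncomputable def pent (n b a : ℕ) : ℝ :=
  if a = 0 then 1 else if b + a < n then 1 else if b + a = n then -((n - a : ℕ) : ℝ) else 0

noncomputable def muent (L : ℕ → ℝ) (a : ℕ) : ℝ := if a = 0 then 1 else L (a + 1)

noncomputable def nsent (n a : ℕ) : ℝ :=
  if a = 0 then (n : ℝ) else ((n - a : ℕ) : ℝ) * (((n - a : ℕ) : ℝ) + 1)

noncomputable def Pmat (n : ℕ) : Matrix (Fin n) (Fin n) ℝ := of fun i k => pent n i.val k.val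

noncomputable def Dmat (n : ℕ) (L : ℕ → ℝ) : Matrix (Fin n) (Fin n) ℝ :=
  of fun i j => ∑ k : Fin n, muent L k.val * pent n i.val k.val * pent n j.val k.val / nsent n k.val

noncomputable def Xf (n : ℕ) (L : ℕ → ℝ) (a : ℕ) : ℝ :=
  if a = 0 then 1/(n:ℝ) else L (a + 1) / (((n - a : ℕ) : ℝ) * (((n - a : ℕ) : ℝ) + 1))

noncomputable def Tq (n : ℕ) (L : ℕ → ℝ) (b : ℕ) : ℝ :=
  1 / (n : ℝ) + ∑ a ∈ Icc 1 (n - 1 - b), L (a + 1) / (((n - a : ℕ) : ℝ) * (((n - a : ℕ) : ℝ) + 1))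

lemma pent_col0 (n b : ℕ) : pent n b 0 = 1 := by simp [pent]

lemma pent_one {n b a : ℕ} (h : b + a < n) : pent n b a = 1 := by
  unfold pent; split_ifs with h1 h2 h3 <;> first | rfl | omega

lemma pent_neg {n b a : ℕ} (ha : a ≠ 0) (h : b + a = n) : pent n b a = -((n - a : ℕ) : ℝ) := by
  unfold pent
  rw [if_neg ha, if_neg (by omega), if_pos h]

lemma pent_zero {n b a : ℕ} (ha : a ≠ 0) (h : n < b + a) : pent n b a = 0 := by
  unfold pent
  rw [if_neg ha, if_neg (by omega), if_neg (by omega)]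

lemma sum_range_ite {n b : ℕ} (h1 : 1 ≤ b) (h2 : b < n) (x y : ℕ → ℝ) :
    ∑ a ∈ range n, (if a + b < n then x a else if a + b = n then y a else 0)
      = (∑ a ∈ range (n - b), x a) + y (n - b) := by
  rw [range_eq_Ico, ← Finset.sum_Ico_consecutive _ (Nat.zero_le (n - b)) (Nat.sub_le n b)]
  congr 1
  · rw [← range_eq_Ico]
    apply Finset.sum_congr rfl
    intro a ha
    rw [Finset.mem_range] at ha
    rw [if_pos (by omega)]
  · rw [Finset.sum_eq_single_of_mem (n - b) (by rw [Finset.mem_Ico]; omega)]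
    · rw [if_neg (by omega), if_pos (by omega)]
    · intro a ha hne
      rw [Finset.mem_Ico] at ha
      rw [if_neg (by omega), if_neg (by omega)]

lemma col_sum (n : ℕ) (a : ℕ) (ha : a < n) :
    ∑ b ∈ range n, pent n b a = if a = 0 then (n : ℝ) else 0 := by
  by_cases h0 : a = 0
  · subst h0; simp [pent]
  · rw [if_neg h0]
    have key : ∀ b ∈ range n, pent n b a
        = (if b + a < n then (fun _ : ℕ => (1:ℝ)) b else if b + a = n then
            (fun _ : ℕ => -((n - a : ℕ) : ℝ)) b else 0) := by
      intro b _
      by_cases h1 : b + a < n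
      · rw [if_pos h1, pent_one h1]
      · by_cases h2 : b + a = n
        · rw [if_neg h1, if_pos h2, pent_neg h0 h2]
        · rw [if_neg h1, if_neg h2, pent_zero h0 (by omega)]
    rw [Finset.sum_congr rfl key, sum_range_ite (by omega) ha]
    simp

lemma gram_le (n : ℕ) (k l : ℕ) (hk0 : 0 < k) (hl : l < n) (hkl : k ≤ l) :
    ∑ b ∈ range n, pent n b k * pent n b l = if k = l then nsent n k else 0 := by
  have hl0 : l ≠ 0 := by omega
  have hk0' : k ≠ 0 := by omega
  have key : ∀ b ∈ range n, pent n b k * pent n b l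
      = (if b + l < n then (fun b : ℕ => pent n b k) b else if b + l = n then
          (fun b : ℕ => pent n b k * -((n - l : ℕ) : ℝ)) b else 0) := by
    intro b _
    by_cases h1 : b + l < n
    · rw [if_pos h1, pent_one h1, mul_one]
    · by_cases h2 : b + l = n
      · rw [if_neg h1, if_pos h2, pent_neg hl0 h2]
      · rw [if_neg h1, if_neg h2, pent_zero hl0 (by omega), mul_zero]
  rw [Finset.sum_congr rfl key, sum_range_ite (by omega) hl]
  rcases eq_or_lt_of_le hkl with heq | hlt
  · subst heq
    rw [if_pos rfl]
    have h1 : ∀ b ∈ range (n - k), pent n b k = 1 := by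
      intro b hb; rw [Finset.mem_range] at hb
      exact pent_one (by omega)
    rw [Finset.sum_congr rfl h1]
    rw [pent_neg hk0' (by omega : n - k + k = n)]
    simp only [Finset.sum_const, Finset.card_range, nsmul_eq_mul, mul_one, nsent, if_neg hk0']
    ring
  · rw [if_neg (by omega)]
    have h1 : ∀ b ∈ range (n - l), pent n b k = 1 := by
      intro b hb; rw [Finset.mem_range] at hb
      exact pent_one (by omega)
    rw [Finset.sum_congr rfl h1, pent_one (by omega : n - l + k < n)]
    simp only [Finset.sum_const, Finset.card_range, nsmul_eq_mul, mul_one, one_mul]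
    ring

lemma sum_X (n : ℕ) (L : ℕ → ℝ) (m : ℕ) (hm : 1 ≤ m) :
    ∑ a ∈ range m, Xf n L a
      = 1/(n:ℝ) + ∑ a ∈ Icc 1 (m - 1), L (a + 1) / (((n - a : ℕ) : ℝ) * (((n - a : ℕ) : ℝ) + 1)) := by
  have hins : range m = insert 0 (Icc 1 (m - 1)) := by
    ext a; simp only [Finset.mem_range, Finset.mem_insert, Finset.mem_Icc]; omega
  rw [hins, Finset.sum_insert (by simp)]
  have h0 : Xf n L 0 = 1/(n:ℝ) := by simp [Xf]
  rw [h0]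
  congr 1
  apply Finset.sum_congr rfl
  intro a ha
  rw [Finset.mem_Icc] at ha
  simp only [Xf, if_neg (by omega : ¬ a = 0)]

lemma Dmat_lt (n : ℕ) (L : ℕ → ℝ) (i j : Fin n) (hij : i.val < j.val) :
    Dmat n L i j = Tq n L j.val - L (n - j.val + 1) / ((j.val : ℝ) + 1) := by
  have hD : Dmat n L i j
      = ∑ a ∈ range n, muent L a * pent n i.val a * pent n j.val a / nsent n a := by
    rw [Dmat, of_apply]
    exact Fin.sum_univ_eq_sum_range (fun a => muent L a * pent n i.val a * pent n j.val a / nsent n a) n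
  set b := j.val with hbdef
  have hb1 : 1 ≤ b := by omega
  have hbn : b < n := j.isLt
  have key : ∀ a ∈ range n, muent L a * pent n i.val a * pent n j.val a / nsent n a
      = (if a + b < n then Xf n L a else if a + b = n then
          (fun a : ℕ => L (a+1) * -((n - a : ℕ) : ℝ) / (((n - a : ℕ) : ℝ) * (((n - a : ℕ) : ℝ) + 1))) a
          else 0) := by
    intro a ha
    rw [Finset.mem_range] at ha
    by_cases ha0 : a = 0
    · subst ha0
      rw [if_pos (by omega), pent_col0, pent_col0]
      simp [muent, nsent, Xf]
    · by_cases h1 : a + b < n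
      · rw [if_pos h1, pent_one (by omega : i.val + a < n), pent_one (by omega : j.val + a < n)]
        simp only [muent, nsent, Xf, if_neg ha0, mul_one]
      · by_cases h2 : a + b = n
        · rw [if_neg h1, if_pos h2, pent_one (by omega : i.val + a < n),
            pent_neg ha0 (by omega : j.val + a = n)]
          simp only [muent, nsent, if_neg ha0, mul_one]
        · rw [if_neg h1, if_neg h2, pent_zero ha0 (by omega : n < j.val + a), mul_zero, zero_div]
  rw [hD, Finset.sum_congr rfl key, sum_range_ite hb1 hbn, sum_X n L (n - b) (by omega)]
  have e1 : n - (n - b) = b := by omega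
  have e2 : n - b - 1 = n - 1 - b := by omega
  rw [e1, e2]
  have hbR : ((b : ℕ) : ℝ) ≠ 0 := by
    simp only [ne_eq, Nat.cast_eq_zero]; omega
  have hbR1 : ((b : ℕ) : ℝ) + 1 ≠ 0 := by positivity
  unfold Tq
  field_simp
  ring

lemma Dmat_diag (n : ℕ) (L : ℕ → ℝ) (j : Fin n) (hj : 1 ≤ j.val) :
    Dmat n L j j = Tq n L j.val + L (n - j.val + 1) * (j.val : ℝ) / ((j.val : ℝ) + 1) := by
  have hD : Dmat n L j j
      = ∑ a ∈ range n, muent L a * pent n j.val a * pent n j.val a / nsent n a := by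
    rw [Dmat, of_apply]
    exact Fin.sum_univ_eq_sum_range (fun a => muent L a * pent n j.val a * pent n j.val a / nsent n a) n
  set b := j.val with hbdef
  have hbn : b < n := j.isLt
  have key : ∀ a ∈ range n, muent L a * pent n j.val a * pent n j.val a / nsent n a
      = (if a + b < n then Xf n L a else if a + b = n then
          (fun a : ℕ => L (a+1) * (((n - a : ℕ) : ℝ) * ((n - a : ℕ) : ℝ)) / (((n - a : ℕ) : ℝ) * (((n - a : ℕ) : ℝ) + 1))) a
          else 0) := by
    intro a ha
    rw [Finset.mem_range] at ha
    by_cases ha0 : a = 0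
    · subst ha0
      rw [if_pos (by omega), pent_col0]
      simp [muent, nsent, Xf]
    · by_cases h1 : a + b < n
      · rw [if_pos h1, pent_one (by omega : j.val + a < n)]
        simp only [muent, nsent, Xf, if_neg ha0, mul_one]
      · by_cases h2 : a + b = n
        · rw [if_neg h1, if_pos h2, pent_neg ha0 (by omega : j.val + a = n)]
          simp only [muent, nsent, if_neg ha0]
          ring
        · rw [if_neg h1, if_neg h2, pent_zero ha0 (by omega : n < j.val + a), mul_zero, zero_div]
  rw [hD, Finset.sum_congr rfl key, sum_range_ite hj hbn, sum_X n L (n - b) (by omega)]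
  have e1 : n - (n - b) = b := by omega
  have e2 : n - b - 1 = n - 1 - b := by omega
  rw [e1, e2]
  have hbR : ((b : ℕ) : ℝ) ≠ 0 := by
    simp only [ne_eq, Nat.cast_eq_zero]; omega
  have hbR1 : ((b : ℕ) : ℝ) + 1 ≠ 0 := by positivity
  unfold Tq
  field_simp

lemma Dmat_zero (n : ℕ) (L : ℕ → ℝ) (hn : 1 ≤ n) (i j : Fin n) (hi : i.val = 0) (hj : j.val = 0) :
    Dmat n L i j = Tq n L 0 := by
  have hD : Dmat n L i j
      = ∑ a ∈ range n, muent L a * pent n i.val a * pent n j.val a / nsent n a := by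
    rw [Dmat, of_apply]
    exact Fin.sum_univ_eq_sum_range (fun a => muent L a * pent n i.val a * pent n j.val a / nsent n a) n
  have key : ∀ a ∈ range n, muent L a * pent n i.val a * pent n j.val a / nsent n a = Xf n L a := by
    intro a ha
    rw [Finset.mem_range] at ha
    by_cases ha0 : a = 0
    · subst ha0
      rw [pent_col0, pent_col0]
      simp [muent, nsent, Xf]
    · rw [pent_one (by omega : i.val + a < n), pent_one (by omega : j.val + a < n)]
      simp only [muent, nsent, Xf, if_neg ha0, mul_one]
  rw [hD, Finset.sum_congr rfl key, sum_X n L n hn]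
  rfl

lemma Dmat_symm (n : ℕ) (L : ℕ → ℝ) (i j : Fin n) : Dmat n L i j = Dmat n L j i := by
  rw [Dmat, of_apply, of_apply]
  apply Finset.sum_congr rfl
  intro k _
  ring

lemma Dmat_rowsum (n : ℕ) (L : ℕ → ℝ) (hn : 1 ≤ n) (i : Fin n) : ∑ j, Dmat n L i j = 1 := by
  have hrw : ∀ j : Fin n, Dmat n L i j
      = ∑ k : Fin n, muent L k.val * pent n i.val k.val * pent n j.val k.val / nsent n k.val :=
    fun j => rfl
  simp only [hrw]
  rw [Finset.sum_comm]
  have inner : ∀ k : Fin n,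
      ∑ j : Fin n, muent L k.val * pent n i.val k.val * pent n j.val k.val / nsent n k.val
        = muent L k.val * pent n i.val k.val * (∑ j : Fin n, pent n j.val k.val) / nsent n k.val := by
    intro k
    rw [Finset.mul_sum, Finset.sum_div]
  simp only [inner]
  have colsum : ∀ k : Fin n, (∑ j : Fin n, pent n j.val k.val)
      = if k.val = 0 then (n : ℝ) else 0 := by
    intro k
    rw [Fin.sum_univ_eq_sum_range (fun b => pent n b k.val) n]
    exact col_sum n k.val k.isLt
  simp only [colsum]
  rw [Finset.sum_eq_single (⟨0, by omega⟩ : Fin n)]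
  · simp [muent, pent_col0, nsent]
    omega
  · intro k _ hk
    have : ¬ (k.val = 0) := by
      intro h
      exact hk (Fin.ext h)
    rw [if_neg this, mul_zero, zero_div]
  · intro h
    exact absurd (Finset.mem_univ _) h

lemma Tq_succ (n : ℕ) (L : ℕ → ℝ) (b : ℕ) (hb : b ≤ n - 2) (hn : 2 ≤ n) :
    Tq n L b = Tq n L (b + 1)
      + L (n - b) / ((((b : ℕ) : ℝ) + 1) * (((b : ℕ) : ℝ) + 2)) := by
  unfold Tq
  have e1 : n - 1 - b = (n - 1 - (b+1)) + 1 := by omega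
  rw [e1, Finset.sum_Icc_succ_top (by omega : 1 ≤ n - 1 - (b+1) + 1)]
  have e2 : n - 1 - (b + 1) + 1 + 1 = n - b := by omega
  have e3 : n - (n - 1 - (b + 1) + 1) = b + 1 := by omega
  rw [e2, e3]
  push_cast
  ring

lemma Tq_top (n : ℕ) (L : ℕ → ℝ) : Tq n L (n - 1) = 1 / (n : ℝ) := by
  unfold Tq
  have h : n - 1 - (n - 1) = 0 := by omega
  rw [h]
  simp

lemma Tq_two (n : ℕ) (L : ℕ → ℝ) (hn : 4 ≤ n) : Tq n L 2 = Squant n L := by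
  unfold Tq Squant
  congr 1
  have hmap : Finset.Icc 2 (n - 2) = Finset.map (addLeftEmbedding 1) (Finset.Icc 1 (n - 3)) := by
    rw [Finset.map_add_left_Icc]
    congr 1
    omega
  rw [hmap, Finset.sum_map]
  apply Finset.sum_congr rfl
  intro a ha
  rw [Finset.mem_Icc] at ha
  simp only [addLeftEmbedding_apply]
  have e1 : n - (1 + a) + 2 = n - a + 1 := by omega
  have e2 : n - (1 + a) + 1 = n - a := by omega
  have e3 : n - 1 - 2 = n - 3 := by omega
  rw [e1, e2, add_comm 1 a]
  push_cast
  ring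

noncomputable def Eq' (n : ℕ) (L : ℕ → ℝ) (b : ℕ) : ℝ :=
  Tq n L b - L (n - b + 1) / (((b : ℕ) : ℝ) + 1)

noncomputable def Gq (n : ℕ) (L : ℕ → ℝ) (b : ℕ) : ℝ :=
  Tq n L b + L (n - b + 1) * ((b : ℕ) : ℝ) / (((b : ℕ) : ℝ) + 1)

lemma E_nonneg (n : ℕ) (hn : 4 ≤ n) (L : ℕ → ℝ) (hub : L 2 ≤ 1)
    (hdec : ∀ j, 2 ≤ j → j < n → L (j + 1) ≤ L j) :
    ∀ b, 1 ≤ b → b ≤ n - 1 → 0 ≤ Eq' n L b := by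
  have key : ∀ d b, 1 ≤ b → b ≤ n - 1 → n - 1 - b = d → 0 ≤ Eq' n L b := by
    intro d
    induction d with
    | zero =>
      intro b h1 h2 h3
      have hb : b = n - 1 := by omega
      subst hb
      unfold Eq'
      rw [Tq_top]
      have e1 : n - (n - 1) + 1 = 2 := by omega
      rw [e1]
      have e2 : ((n - 1 : ℕ) : ℝ) = (n : ℝ) - 1 := by
        push_cast [Nat.cast_sub (by omega : 1 ≤ n)]; ring
      rw [e2]
      have hn0 : (0:ℝ) < (n:ℝ) := by positivity
      rw [sub_add_cancel, sub_nonneg]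
      gcongr
    | succ d ih =>
      intro b h1 h2 h3
      have hb2 : b ≤ n - 2 := by omega
      have hstep : Eq' n L b = Eq' n L (b + 1) + (L (n - b) - L (n - b + 1)) / (((b:ℕ):ℝ) + 1) := by
        unfold Eq'
        rw [Tq_succ n L b hb2 (by omega)]
        have e1 : n - (b + 1) + 1 = n - b := by omega
        rw [e1]
        have hbR : (0:ℝ) < ((b:ℕ):ℝ) + 1 := by positivity
        have hbR2 : (0:ℝ) < ((b:ℕ):ℝ) + 2 := by positivity
        push_cast
        field_simp
        ring
      have hmono : L (n - b + 1) ≤ L (n - b) := by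
        have := hdec (n - b) (by omega) (by omega)
        linarith [this]
      have hE1 := ih (b + 1) (by omega) (by omega) (by omega)
      rw [hstep]
      have : 0 ≤ (L (n - b) - L (n - b + 1)) / (((b:ℕ):ℝ) + 1) := by
        apply div_nonneg (by linarith) (by positivity)
      linarith
  intro b h1 h2
  exact key (n - 1 - b) b h1 h2 rfl

lemma G_nonneg (n : ℕ) (hn : 4 ≤ n) (L : ℕ → ℝ)
    (hdec : ∀ j, 2 ≤ j → j < n → L (j + 1) ≤ L j)
    (hcond2 : 0 ≤ Squant n L + 2 * L n / 3) :
    ∀ b, 2 ≤ b → b ≤ n - 1 → 0 ≤ Gq n L b := by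
  have hmono_top : L n ≤ L (n - 1) := by
    have h := hdec (n - 1) (by omega) (by omega)
    have e : n - 1 + 1 = n := by omega
    rw [e] at h
    exact h
  have base : 0 ≤ Gq n L 2 := by
    unfold Gq
    rw [Tq_two n L hn]
    have e1 : n - 2 + 1 = n - 1 := by omega
    rw [e1]
    push_cast
    have h : L (n - 1) * 2 / (2 + 1) = 2 * L (n - 1) / 3 := by ring
    rw [h]
    linarith
  have key : ∀ d b, b = 2 + d → b ≤ n - 1 → 0 ≤ Gq n L b := by
    intro d
    induction d with
    | zero =>
      intro b hb _
      have : b = 2 := by omega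
      subst this
      exact base
    | succ d ih =>
      intro b hb hbn
      set c := 2 + d with hc
      have hbc : b = c + 1 := by omega
      have hc2 : c ≤ n - 2 := by omega
      have hstep : Gq n L (c + 1)
          = Gq n L c + (((c:ℕ):ℝ) / (((c:ℕ):ℝ) + 1)) * (L (n - c) - L (n - c + 1)) := by
        unfold Gq
        rw [Tq_succ n L c hc2 (by omega)]
        have e1 : n - (c + 1) + 1 = n - c := by omega
        rw [e1]
        have hbR : (0:ℝ) < ((c:ℕ):ℝ) + 1 := by positivity
        have hbR2 : (0:ℝ) < ((c:ℕ):ℝ) + 2 := by positivity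
        push_cast
        field_simp
        ring
      have hmono : L (n - c + 1) ≤ L (n - c) := by
        have := hdec (n - c) (by omega) (by omega)
        linarith [this]
      have hG := ih c rfl (by omega)
      rw [hbc, hstep]
      have : 0 ≤ (((c:ℕ):ℝ) / (((c:ℕ):ℝ) + 1)) * (L (n - c) - L (n - c + 1)) := by
        apply mul_nonneg (by positivity) (by linarith)
      linarith
  intro b h1 h2
  exact key (b - 2) b (by omega) h2

lemma charpoly_conj {n : ℕ} (P Q A : Matrix (Fin n) (Fin n) ℝ) (h1 : P * Q = 1) (h2 : Q * P = 1) :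
    (P * A * Q).charpoly = A.charpoly := by
  have hPQ : P.map (C : ℝ →+* ℝ[X]) * Q.map (C : ℝ →+* ℝ[X]) = 1 := by
    rw [← Matrix.map_mul, h1, Matrix.map_one _ (map_zero _) (map_one _)]
  have hmap : charmatrix (P * A * Q)
      = P.map (C : ℝ →+* ℝ[X]) * charmatrix A * Q.map (C : ℝ →+* ℝ[X]) := by
    unfold charmatrix
    rw [Matrix.mul_sub, Matrix.sub_mul]
    congr 1
    · have hc : P.map (C : ℝ →+* ℝ[X]) * Matrix.scalar (Fin n) (X : ℝ[X])
          = Matrix.scalar (Fin n) (X : ℝ[X]) * P.map (C : ℝ →+* ℝ[X]) :=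
        (Matrix.scalar_commute (X : ℝ[X]) (fun r => Commute.all _ _) _).symm
      rw [hc, Matrix.mul_assoc, hPQ, Matrix.mul_one]
    · simp only [RingHom.mapMatrix_apply]
      rw [← Matrix.map_mul, ← Matrix.map_mul]
  unfold Matrix.charpoly
  rw [hmap, Matrix.det_mul, Matrix.det_mul]
  have hd : (P.map (C : ℝ →+* ℝ[X])).det * (Q.map (C : ℝ →+* ℝ[X])).det = 1 := by
    rw [← Matrix.det_mul, hPQ, Matrix.det_one]
  calc (P.map (C : ℝ →+* ℝ[X])).det * (charmatrix A).det * (Q.map (C : ℝ →+* ℝ[X])).det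
      = (charmatrix A).det * ((P.map (C : ℝ →+* ℝ[X])).det * (Q.map (C : ℝ →+* ℝ[X])).det) := by ring
    _ = (charmatrix A).det := by rw [hd, mul_one]

lemma charpoly_diag {n : ℕ} (d : Fin n → ℝ) :
    (diagonal d).charpoly = ∏ k, (X - C (d k)) := by
  unfold Matrix.charpoly
  have h : charmatrix (diagonal d) = diagonal (fun k => X - C (d k)) := by
    ext i j
    by_cases h : i = j
    · subst h
      rw [charmatrix_apply_eq, diagonal_apply_eq, diagonal_apply_eq]
    · rw [charmatrix_apply_ne _ _ _ h, diagonal_apply_ne _ h, diagonal_apply_ne _ h, map_zero, neg_zero]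
  rw [h, det_diagonal]

lemma gram_zero (n : ℕ) (l : ℕ) (hl : l < n) :
    ∑ b ∈ range n, pent n b 0 * pent n b l = if l = 0 then (n:ℝ) else 0 := by
  have h : ∀ b ∈ range n, pent n b 0 * pent n b l = pent n b l := by
    intro b _; rw [pent_col0, one_mul]
  rw [Finset.sum_congr rfl h, col_sum n l hl]

lemma PtP (n : ℕ) (hn : 1 ≤ n) :
    (Pmat n)ᵀ * Pmat n = diagonal (fun k : Fin n => nsent n k.val) := by
  ext k l
  rw [Matrix.mul_apply]
  simp only [transpose_apply, Pmat, of_apply]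
  rw [Fin.sum_univ_eq_sum_range (fun b => pent n b k.val * pent n b l.val) n]
  have hgram : ∀ k0 l0 : ℕ, k0 ≤ l0 → l0 < n →
      ∑ b ∈ range n, pent n b k0 * pent n b l0 = if k0 = l0 then nsent n k0 else 0 := by
    intro k0 l0 hle hl0
    by_cases hk0 : k0 = 0
    · subst hk0
      rw [gram_zero n l0 hl0]
      by_cases h : l0 = 0
      · subst h; rw [if_pos rfl]; simp [nsent]
      · rw [if_neg h, if_neg (by omega)]
    · exact gram_le n k0 l0 (by omega) hl0 hle
  rcases le_or_gt k.val l.val with h | h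
  · rw [hgram k.val l.val h l.isLt]
    by_cases he : k = l
    · subst he; rw [if_pos rfl, diagonal_apply_eq]
    · rw [if_neg (fun hv => he (Fin.ext hv)), diagonal_apply_ne _ he]
  · have hsw : ∀ b ∈ range n, pent n b k.val * pent n b l.val
        = pent n b l.val * pent n b k.val := by
      intro b _; ring
    rw [Finset.sum_congr rfl hsw, hgram l.val k.val (le_of_lt h) k.isLt]
    have he : k ≠ l := fun hv => by omega
    rw [if_neg (by omega), diagonal_apply_ne _ he]

lemma nsent_pos (n : ℕ) (hn : 1 ≤ n) (a : ℕ) (ha : a < n) : 0 < nsent n a := by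
  unfold nsent
  by_cases h : a = 0
  · rw [if_pos h]
    exact_mod_cast by omega
  · rw [if_neg h]
    have h1 : (0:ℝ) < ((n - a : ℕ) : ℝ) := by exact_mod_cast by omega
    positivity

lemma Pdet_unit (n : ℕ) (hn : 1 ≤ n) : IsUnit (Pmat n).det := by
  have h1 : (Pmat n).det * (Pmat n).det = ∏ k : Fin n, nsent n k.val := by
    have h := congrArg Matrix.det (PtP n hn)
    rwa [Matrix.det_mul, Matrix.det_transpose, Matrix.det_diagonal] at h
  have h2 : 0 < ∏ k : Fin n, nsent n k.val :=
    Finset.prod_pos (fun k _ => nsent_pos n hn k.val k.isLt)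
  rw [isUnit_iff_ne_zero]
  intro h
  rw [h, zero_mul] at h1
  exact absurd h1.symm (ne_of_gt h2)

lemma DP_eq (n : ℕ) (L : ℕ → ℝ) (hn : 1 ≤ n) :
    Dmat n L * Pmat n = Pmat n * diagonal (fun k : Fin n => muent L k.val) := by
  have hD : Dmat n L = Pmat n *
      (diagonal (fun k : Fin n => muent L k.val * (nsent n k.val)⁻¹) * (Pmat n)ᵀ) := by
    ext i j
    rw [Matrix.mul_apply]
    have h : ∀ k : Fin n, Pmat n i k *
        (diagonal (fun k : Fin n => muent L k.val * (nsent n k.val)⁻¹) * (Pmat n)ᵀ) k j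
        = muent L k.val * pent n i.val k.val * pent n j.val k.val / nsent n k.val := by
      intro k
      rw [Matrix.diagonal_mul, transpose_apply]
      simp only [Pmat, of_apply]
      rw [div_eq_mul_inv]
      ring
    simp only [h]
    rfl
  rw [hD, Matrix.mul_assoc, Matrix.mul_assoc, PtP n hn, diagonal_mul_diagonal]
  have hfun : (fun k : Fin n => muent L k.val * (nsent n k.val)⁻¹ * nsent n k.val)
      = fun k : Fin n => muent L k.val := by
    funext k
    rw [mul_assoc, inv_mul_cancel₀ (ne_of_gt (nsent_pos n hn k.val k.isLt)), mul_one]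
  rw [hfun]

lemma prod_mu (n : ℕ) (hn : 1 ≤ n) (L : ℕ → ℝ) :
    ∏ k : Fin n, (X - C (muent L k.val)) = (X - C 1) * ∏ j ∈ Icc 2 n, (X - C (L j)) := by
  rw [Fin.prod_univ_eq_prod_range (fun a => X - C (muent L a)) n]
  rw [range_eq_Ico, ← Finset.prod_Ico_consecutive _ (Nat.zero_le 1) (by omega : 1 ≤ n)]
  congr 1
  · have h01 : Finset.Ico 0 1 = {0} := by decide
    rw [h01, Finset.prod_singleton]
    simp [muent]
  · have hmap : Finset.Icc 2 n = Finset.map (addLeftEmbedding 1) (Finset.Ico 1 n) := by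
      rw [Finset.map_add_left_Ico, ← Finset.Ico_add_one_right_eq_Icc]
      congr 1
      omega
    rw [hmap, Finset.prod_map]
    apply Finset.prod_congr rfl
    intro a ha
    rw [Finset.mem_Ico] at ha
    simp only [addLeftEmbedding_apply, muent, if_neg (by omega : ¬ a = 0)]
    rw [add_comm 1 a]

end RdiepAux

/-- For `n ≥ 4`, `1 ≥ λ₂ ≥ ⋯ ≥ λₙ ≥ -1` with `1 + λ₂ + ⋯ + λₙ ≥ 0`: if both
`S - 2λ_{n-1}/3 + λₙ/3 ≥ 0` and `S + 2λₙ/3 ≥ 0` hold, then `1, λ₂, …, λₙ` is the spectrum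
of an `n × n` doubly stochastic matrix. -/
theorem rdiep_W (n : ℕ) (hn : 4 ≤ n) (L : ℕ → ℝ) (hub : L 2 ≤ 1)
    (hdec : ∀ j, 2 ≤ j → j < n → L (j + 1) ≤ L j)
    (hlb : -1 ≤ L n)
    (htr : 0 ≤ 1 + ∑ j ∈ Finset.Icc 2 n, L j)
    (hcond1 : 0 ≤ Squant n L - 2 * L (n - 1) / 3 + L n / 3)
    (hcond2 : 0 ≤ Squant n L + 2 * L n / 3) :
    ∃ D : Matrix (Fin n) (Fin n) ℝ, DoublyStochastic D ∧
      D.charpoly = (X - C 1) * ∏ j ∈ Finset.Icc 2 n, (X - C (L j)) := by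
  classical
  open RdiepAux in
  refine ⟨Dmat n L, ⟨?_, ?_, ?_⟩, ?_⟩
  · -- nonnegativity
    have hmono_top : L n ≤ L (n - 1) := by
      have h := hdec (n - 1) (by omega) (by omega)
      have e : n - 1 + 1 = n := by omega
      rw [e] at h
      exact h
    have hT1 : Tq n L 1 = Squant n L + L (n - 1) / 6 := by
      have h := Tq_succ n L 1 (by omega) (by omega)
      rw [Tq_two n L hn] at h
      have e1 : n - 1 = n - 1 := rfl
      rw [h]
      norm_num
    have hT0 : 0 ≤ Tq n L 0 := by
      have h := Tq_succ n L 0 (by omega) (by omega)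
      rw [Nat.sub_zero] at h
      rw [h, hT1]
      norm_num
      linarith
    have main : ∀ i j : Fin n, i.val ≤ j.val → 0 ≤ Dmat n L i j := by
      intro i j hij
      rcases eq_or_lt_of_le hij with heq | hlt
      · have hij' : i = j := Fin.ext heq
        subst hij'
        rcases Nat.eq_zero_or_pos i.val with h0 | hpos
        · rw [Dmat_zero n L (by omega) i i h0 h0]
          exact hT0
        · rcases eq_or_lt_of_le (show 0 + 1 ≤ i.val from hpos) with h1 | h2
          · -- i.val = 1
            rw [Dmat_diag n L i (by omega)]
            rw [← h1]
            have e1 : n - 1 + 1 = n := by omega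
            rw [e1]
            rw [hT1]
            push_cast [← h1]
            norm_num
            linarith
          · -- i.val ≥ 2
            have hG := G_nonneg n hn L hdec hcond2 i.val (by omega) (by omega)
            unfold Gq at hG
            rw [Dmat_diag n L i (by omega)]
            exact hG
      · rw [Dmat_lt n L i j hlt]
        have hE := E_nonneg n hn L hub hdec j.val (by omega) (by omega)
        unfold Eq' at hE
        exact hE
    intro i j
    rcases le_total i.val j.val with h | h
    · exact main i j h
    · rw [Dmat_symm]
      exact main j i h
  · exact Dmat_rowsum n L (by omega)
  · intro j
    have h : ∀ i : Fin n, Dmat n L i j = Dmat n L j i := fun i => Dmat_symm n L i j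
    simp only [h]
    exact Dmat_rowsum n L (by omega) j
  · have hdet := Pdet_unit n (by omega)
    have hDP := DP_eq n L (by omega)
    have hconj : Dmat n L = Pmat n * diagonal (fun k : Fin n => muent L k.val) * (Pmat n)⁻¹ := by
      rw [← hDP, Matrix.mul_nonsing_inv_cancel_right _ _ hdet]
    rw [hconj, charpoly_conj _ _ _ (Matrix.mul_nonsing_inv _ hdet) (Matrix.nonsing_inv_mul _ hdet),
      charpoly_diag, prod_mu n (by omega) L]
end

section
/- Let n ≥ 5, let 1 ≥ λ₂ ≥ ... ≥ λ_{n−2} ≥ −1 be real numbers, and let a, b be real numbers with a² + b² ≤ 1 and 1 + λ₂ + ... + λ_{n−2} + 2a ≥ 0. Set S = 1/n + Σ_{j=2}^{n−2} λ_j/((n−j+2)(n−j+1)) (so that the coefficient of λ₂ is 1/(n(n−1)) and of λ_{n−2} is 1/12). If the four inequalities S + 2a/3 ≥ 0, S − a/3 − (√3/3)·b ≥ 0, S − a/3 + (√3/3)·b ≥ 0, and 1/n + Σ_{j=2}^{n−3} λ_j/((n−j+2)(n−j+1)) + 3λ_{n−2}/4 ≥ 0 all hold, then there exists an n×n doubly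 stochastic matrix whose eigenvalues, counted with algebraic multiplicity, are 1, λ₂, ..., λ_{n−2}, a + ib, a − ib (where i is the imaginary unit). -/
open Matrix Polynomial

namespace DiepAux

variable (n : ℕ) (L : ℕ → ℝ) (a b : ℝ)

/-- partial sums of the Soules expansion -/
noncomputable def g (q : ℕ) : ℝ :=
  1 / (n : ℝ) + ∑ j ∈ Finset.Icc 2 (n - q), L j / (((n - j + 2) * (n - j + 1) : ℕ) : ℝ)

noncomputable def offd (q : ℕ) : ℝ := g n L q - L (n - q + 1) / (q + 1)

noncomputable def diagv (q : ℕ) : ℝ := g n L q + L (n - q + 1) * q / (q + 1)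

noncomputable def cc (r : ℕ) : ℝ :=
  if r % 3 = 0 then 2 * a / 3
  else if r % 3 = 1 then -(a / 3) + Real.sqrt 3 / 3 * b
  else -(a / 3) - Real.sqrt 3 / 3 * b

/-- unnormalized Soules vector -/
def w (j p : ℕ) : ℝ :=
  if p + j ≤ n then 1 else if p + j = n + 1 then -((n - j + 1 : ℕ) : ℝ) else 0

lemma gstep (q : ℕ) (h : q + 2 ≤ n) :
    g n L q = g n L (q + 1) + L (n - q) / (((q + 2) * (q + 1) : ℕ) : ℝ) := by
  unfold g
  have h1 : n - q = (n - (q + 1)) + 1 := by omega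
  have h2 : 2 ≤ n - q := by omega
  have h3 : n - (n - q) + 2 = q + 2 := by omega
  have h4 : n - (n - q) + 1 = q + 1 := by omega
  rw [h1, Finset.sum_Icc_succ_top (by omega : 2 ≤ n - (q + 1) + 1)]
  rw [← h1, h3, h4]
  ring

lemma offd_eq (s : ℕ) (h3 : 3 ≤ s) (hs : s ≤ n - 1) (hn : 5 ≤ n) :
    offd n L s = (s + 1) * g n L s - s * g n L (s - 1) := by
  have hg : g n L (s - 1) = g n L s + L (n - s + 1) / (((s + 1) * s : ℕ) : ℝ) := by
    have := gstep n L (s - 1) (by omega)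
    have e1 : s - 1 + 1 = s := by omega
    have e2 : n - (s - 1) = n - s + 1 := by omega
    have e3 : s - 1 + 2 = s + 1 := by omega
    rwa [e1, e2, e3] at this
  rw [hg]
  unfold offd
  have hs0 : (s : ℝ) ≠ 0 := by positivity
  have hs1 : (s : ℝ) + 1 ≠ 0 := by positivity
  push_cast
  field_simp
  ring

/-- partial sums of off-diagonal values -/
lemma P2 (hn : 5 ≤ n) (s : ℕ) (h3 : 3 ≤ s) (hs : s ≤ n) :
    ∑ q ∈ Finset.Ico 3 s, offd n L q = s * g n L (s - 1) - 3 * g n L 2 := by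
  induction s, h3 using Nat.le_induction with
  | base => simp
  | succ s hs3 ih =>
    rw [Finset.sum_Ico_succ_top hs3, ih (by omega), offd_eq n L s hs3 (by omega) hn]
    have : s + 1 - 1 = s := by omega
    rw [this]
    push_cast
    ring

lemma g_nsub1 : g n L (n - 1) = 1 / n := by
  unfold g
  have : n - (n - 1) = 1 ∨ n = 0 := by omega
  rcases this with h | h
  · rw [h]; simp
  · simp [h]


lemma offd_step (hn : 5 ≤ n) (q : ℕ) (h3 : 3 ≤ q) (hq : q ≤ n - 2) :
    offd n L q - offd n L (q + 1) = (L (n - q) - L (n - q + 1)) / (q + 1) := by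
  have hg := gstep n L q (by omega)
  unfold offd
  rw [hg]
  have e1 : n - (q + 1) + 1 = n - q := by omega
  rw [e1]
  have h0 : ((q : ℝ) + 1) ≠ 0 := by positivity
  have h2 : ((q : ℝ) + 2) ≠ 0 := by positivity
  push_cast
  field_simp
  ring

lemma diagv_step (hn : 5 ≤ n) (q : ℕ) (h3 : 3 ≤ q) (hq : q ≤ n - 2) :
    diagv n L (q + 1) - diagv n L q = (q : ℝ) / (q + 1) * (L (n - q) - L (n - q + 1)) := by
  have hg := gstep n L q (by omega)
  unfold diagv
  rw [hg]
  have e1 : n - (q + 1) + 1 = n - q := by omega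
  rw [e1]
  have h0 : ((q : ℝ) + 1) ≠ 0 := by positivity
  have h2 : ((q : ℝ) + 2) ≠ 0 := by positivity
  push_cast
  field_simp
  ring

lemma offd_nonneg (hn : 5 ≤ n) (hub : L 2 ≤ 1)
    (hdec : ∀ j, 2 ≤ j → j < n - 2 → L (j + 1) ≤ L j)
    (q : ℕ) (h3 : 3 ≤ q) (hq : q ≤ n - 1) : 0 ≤ offd n L q := by
  have base : 0 ≤ offd n L (n - 1) := by
    unfold offd
    rw [g_nsub1]
    have e1 : n - (n - 1) + 1 = 2 := by omega
    have e2 : ((n : ℕ) - 1 : ℕ) + (1 : ℝ) = (n : ℝ) := by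
      have : ((n - 1 : ℕ) : ℝ) = (n : ℝ) - 1 := by
        push_cast [Nat.cast_sub (by omega : 1 ≤ n)]; ring
      rw [this]; ring
    rw [e1, e2]
    have hn0 : (0 : ℝ) < n := by positivity
    rw [div_sub_div_same, le_div_iff₀ hn0]
    linarith
  -- downward induction
  have aux : ∀ d, d ≤ n - 4 → 0 ≤ offd n L (n - 1 - d) := by
    intro d
    induction d with
    | zero => intro _; simpa using base
    | succ d ih =>
      intro hd
      have h1 : 0 ≤ offd n L (n - 1 - d) := ih (by omega)
      have e : n - 1 - (d + 1) + 1 = n - 1 - d := by omega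
      have hstep := offd_step n L hn (n - 1 - (d + 1)) (by omega) (by omega)
      rw [e] at hstep
      have hmono : L (n - (n - 1 - (d + 1)) + 1) ≤ L (n - (n - 1 - (d + 1))) := by
        have e2 : n - (n - 1 - (d + 1)) + 1 = (n - (n - 1 - (d + 1))) + 1 := rfl
        exact hdec _ (by omega) (by omega)
      have hden : (0:ℝ) < ((n - 1 - (d+1) : ℕ) : ℝ) + 1 := by positivity
      nlinarith [div_nonneg (by linarith : (0:ℝ) ≤ L (n - (n - 1 - (d + 1))) - L (n - (n - 1 - (d + 1)) + 1)) (le_of_lt hden)]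
  have := aux (n - 1 - q) (by omega)
  have e : n - 1 - (n - 1 - q) = q := by omega
  rwa [e] at this

lemma diagv_nonneg (hn : 5 ≤ n)
    (hdec : ∀ j, 2 ≤ j → j < n - 2 → L (j + 1) ≤ L j)
    (hc4 : 0 ≤ 1 / (n : ℝ) +
        (∑ j ∈ Finset.Icc 2 (n - 3), L j / (((n - j + 2) * (n - j + 1) : ℕ) : ℝ)) +
        3 * L (n - 2) / 4)
    (q : ℕ) (h3 : 3 ≤ q) (hq : q ≤ n - 1) : 0 ≤ diagv n L q := by
  have base : 0 ≤ diagv n L 3 := by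
    unfold diagv g
    have e1 : n - 3 + 1 = n - 2 := by omega
    rw [e1]
    have : L (n-2) * (3:ℕ) / ((3:ℕ)+1) = 3 * L (n - 2) / 4 := by push_cast; ring
    rw [this]
    linarith [hc4]
  clear hc4
  induction q, h3 using Nat.le_induction with
  | base => exact base
  | succ q h3q ih =>
    have h1 : 0 ≤ diagv n L q := ih (by omega)
    have hstep := diagv_step n L hn q (by omega) (by omega)
    have hmono : L (n - q + 1) ≤ L (n - q) := hdec _ (by omega) (by omega)
    have hden : (0:ℝ) < (q : ℝ) + 1 := by positivity
    nlinarith [mul_nonneg (div_nonneg (by positivity : (0:ℝ) ≤ (q:ℝ)) (le_of_lt hden)) (by linarith : (0:ℝ) ≤ L (n - q) - L (n - q + 1))]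

noncomputable def Dent (p q : ℕ) : ℝ :=
  if p ≤ 2 ∧ q ≤ 2 then Squant n L + cc a b ((q + 3 - p) % 3)
  else if p = q then diagv n L p else offd n L (max p q)

lemma Squant_eq_g : Squant n L = g n L 2 := rfl

lemma sum3row (p : ℕ) (hp : p ≤ 2) :
    ∑ q ∈ Finset.range 3, Dent n L a b p q = 3 * g n L 2 := by
  rw [Finset.sum_range_succ, Finset.sum_range_succ, Finset.sum_range_one]
  rw [← Squant_eq_g]
  interval_cases p <;> norm_num [Dent, cc] <;> ring

lemma sum3col (q : ℕ) (hq : q ≤ 2) :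
    ∑ p ∈ Finset.range 3, Dent n L a b p q = 3 * g n L 2 := by
  rw [Finset.sum_range_succ, Finset.sum_range_succ, Finset.sum_range_one]
  rw [← Squant_eq_g]
  interval_cases q <;> norm_num [Dent, cc] <;> ring

lemma PSlt (hn : 5 ≤ n) (p s : ℕ) (hps : p < s) (h3 : 3 ≤ s) (hs : s ≤ n) :
    ∑ q ∈ Finset.range s, Dent n L a b p q = s * g n L (s - 1) := by
  rcases le_or_gt p 2 with hp | hp
  · rw [Finset.range_eq_Ico, ← Finset.sum_Ico_consecutive _ (by omega : 0 ≤ 3) (by omega : 3 ≤ s),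
      ← Finset.range_eq_Ico]
    rw [sum3row n L a b p hp]
    have h2 : ∑ q ∈ Finset.Ico 3 s, Dent n L a b p q = ∑ q ∈ Finset.Ico 3 s, offd n L q := by
      refine Finset.sum_congr rfl fun q hq => ?_
      simp only [Finset.mem_Ico] at hq
      have : ¬ (p ≤ 2 ∧ q ≤ 2) := by omega
      have hne : p ≠ q := by omega
      have hm : max p q = q := by omega
      simp [Dent, this, hne, hm]
    rw [h2, P2 n L hn s h3 hs]
    ring
  · have h1 : ∑ q ∈ Finset.Ico 0 p, Dent n L a b p q = p * offd n L p := by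
      have : ∀ q ∈ Finset.Ico 0 p, Dent n L a b p q = offd n L p := by
        intro q hq
        simp only [Finset.mem_Ico] at hq
        have : ¬ (p ≤ 2 ∧ q ≤ 2) := by omega
        have hne : p ≠ q := by omega
        have hm : max p q = p := by omega
        simp [Dent, this, hne, hm]
      rw [Finset.sum_congr rfl this, Finset.sum_const]
      simp
    have h2 : ∑ q ∈ Finset.Ico (p+1) s, Dent n L a b p q
        = s * g n L (s-1) - (p+1) * g n L p := by
      have e : ∀ q ∈ Finset.Ico (p+1) s, Dent n L a b p q = offd n L q := by
        intro q hq
        simp only [Finset.mem_Ico] at hq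
        have : ¬ (p ≤ 2 ∧ q ≤ 2) := by omega
        have hne : p ≠ q := by omega
        have hm : max p q = q := by omega
        simp [Dent, this, hne, hm]
      rw [Finset.sum_congr rfl e]
      have split : ∑ q ∈ Finset.Ico 3 (p+1), offd n L q + ∑ q ∈ Finset.Ico (p+1) s, offd n L q
          = ∑ q ∈ Finset.Ico 3 s, offd n L q :=
        Finset.sum_Ico_consecutive _ (by omega) (by omega)
      have hA := P2 n L hn (p+1) (by omega) (by omega)
      have hB := P2 n L hn s h3 hs
      have e2 : p + 1 - 1 = p := by omega
      rw [e2] at hA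
      push_cast at hA hB ⊢
      linarith
    have hDpp : Dent n L a b p p = diagv n L p := by
      have hp2 : ¬ p ≤ 2 := by omega
      simp [Dent, hp2]
    rw [Finset.range_eq_Ico,
      ← Finset.sum_Ico_consecutive _ (by omega : 0 ≤ p+1) (by omega : p+1 ≤ s),
      Finset.sum_Ico_succ_top (by omega : 0 ≤ p), h1, hDpp, h2]
    unfold diagv offd
    have hp1 : ((p:ℝ) + 1) ≠ 0 := by positivity
    field_simp
    ring

lemma rowsum (hn : 5 ≤ n) (p : ℕ) (hp : p < n) :
    ∑ q ∈ Finset.range n, Dent n L a b p q = 1 := by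
  rw [PSlt n L a b hn p n hp (by omega) le_rfl, g_nsub1]
  field_simp

lemma Dent_symm (p q : ℕ) (h : 3 ≤ p ∨ 3 ≤ q) :
    Dent n L a b p q = Dent n L a b q p := by
  have h1 : ¬ (p ≤ 2 ∧ q ≤ 2) := by omega
  have h2 : ¬ (q ≤ 2 ∧ p ≤ 2) := by omega
  rcases eq_or_ne p q with rfl | hne
  · rfl
  · simp [Dent, h1, h2, hne, hne.symm, max_comm p q]

lemma colsum (hn : 5 ≤ n) (q : ℕ) (hq : q < n) :
    ∑ p ∈ Finset.range n, Dent n L a b p q = 1 := by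
  rcases le_or_gt 3 q with h | h
  · rw [Finset.sum_congr rfl fun p _ => Dent_symm n L a b p q (Or.inr h)]
    exact rowsum n L a b hn q hq
  · rw [Finset.range_eq_Ico, ← Finset.sum_Ico_consecutive _ (by omega : 0 ≤ 3) (by omega : 3 ≤ n),
      ← Finset.range_eq_Ico, sum3col n L a b q (by omega)]
    have h2 : ∑ p ∈ Finset.Ico 3 n, Dent n L a b p q = ∑ p ∈ Finset.Ico 3 n, offd n L p := by
      refine Finset.sum_congr rfl fun p hp => ?_
      simp only [Finset.mem_Ico] at hp
      have : ¬ (p ≤ 2 ∧ q ≤ 2) := by omega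
      have hne : p ≠ q := by omega
      have hm : max p q = p := by omega
      simp [Dent, this, hne, hm]
    rw [h2, P2 n L hn n (by omega) le_rfl, g_nsub1]
    field_simp
    ring

lemma Dent_nonneg (hn : 5 ≤ n) (hub : L 2 ≤ 1)
    (hdec : ∀ j, 2 ≤ j → j < n - 2 → L (j + 1) ≤ L j)
    (hc1 : 0 ≤ Squant n L + 2 * a / 3)
    (hc2 : 0 ≤ Squant n L - a / 3 - Real.sqrt 3 / 3 * b)
    (hc3 : 0 ≤ Squant n L - a / 3 + Real.sqrt 3 / 3 * b)
    (hc4 : 0 ≤ 1 / (n : ℝ) +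
        (∑ j ∈ Finset.Icc 2 (n - 3), L j / (((n - j + 2) * (n - j + 1) : ℕ) : ℝ)) +
        3 * L (n - 2) / 4)
    (p q : ℕ) (hp : p < n) (hq : q < n) : 0 ≤ Dent n L a b p q := by
  unfold Dent
  split_ifs with hA hd
  · set r := (q + 3 - p) % 3 with hr
    have : r = 0 ∨ r = 1 ∨ r = 2 := by omega
    rcases this with h | h | h <;> rw [h] <;> simp only [cc] <;> norm_num
    · linarith [hc1]
    · linarith [hc3]
    · linarith [hc2]
  · exact diagv_nonneg n L hn hdec hc4 p (by omega) (by omega)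
  · exact offd_nonneg n L hn hub hdec (max p q) (by omega) (by omega)

lemma PSge (p s : ℕ) (h3 : 3 ≤ s) (hsp : s ≤ p) (hp : p < n) :
    ∑ q ∈ Finset.range s, Dent n L a b p q = s * offd n L p := by
  have : ∀ q ∈ Finset.range s, Dent n L a b p q = offd n L p := by
    intro q hq
    simp only [Finset.mem_range] at hq
    have h1 : ¬ (p ≤ 2 ∧ q ≤ 2) := by omega
    have hne : p ≠ q := by omega
    have hm : max p q = p := by omega
    simp [Dent, h1, hne, hm]
  rw [Finset.sum_congr rfl this, Finset.sum_const]
  simp [mul_comm]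

lemma w_lt (j q : ℕ) (h : q + j ≤ n) : w n j q = 1 := by simp [w, h]

lemma w_eq (j q : ℕ) (h1 : q + j = n + 1) : w n j q = -((n - j + 1 : ℕ) : ℝ) := by
  have h2 : ¬ (q + j ≤ n) := by omega
  simp [w, h1, h2]

lemma w_gt (j q : ℕ) (h : n + 1 < q + j) : w n j q = 0 := by
  have h1 : ¬ (q + j ≤ n) := by omega
  have h2 : ¬ (q + j = n + 1) := by omega
  simp [w, h1, h2]

lemma eigen_real (hn : 5 ≤ n) (j : ℕ) (hj2 : 2 ≤ j) (hjn : j + 2 ≤ n)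
    (p : ℕ) (hp : p < n) :
    ∑ q ∈ Finset.range n, Dent n L a b p q * w n j q = L j * w n j p := by
  set s := n - j + 1 with hs
  have hs3 : 3 ≤ s := by omega
  have hsn : s ≤ n - 1 := by omega
  have hws : w n j s = -(s : ℝ) := by
    rw [w_eq n j s (by omega)]
  -- split the sum
  have hsplit : ∑ q ∈ Finset.range n, Dent n L a b p q * w n j q
      = (∑ q ∈ Finset.range s, Dent n L a b p q) + Dent n L a b p s * (-(s:ℝ)) := by
    rw [Finset.range_eq_Ico,
      ← Finset.sum_Ico_consecutive _ (by omega : 0 ≤ s) (by omega : s ≤ n),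
      ← Finset.sum_Ico_consecutive _ (by omega : s ≤ s+1) (by omega : s+1 ≤ n)]
    have e1 : ∑ q ∈ Finset.Ico 0 s, Dent n L a b p q * w n j q
        = ∑ q ∈ Finset.Ico 0 s, Dent n L a b p q := by
      refine Finset.sum_congr rfl fun q hq => ?_
      simp only [Finset.mem_Ico] at hq
      rw [w_lt n j q (by omega), mul_one]
    have e2 : ∑ q ∈ Finset.Ico s (s+1), Dent n L a b p q * w n j q
        = Dent n L a b p s * (-(s:ℝ)) := by
      rw [Finset.sum_Ico_succ_top (by omega), Finset.Ico_self, Finset.sum_empty, zero_add, hws]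
    have e3 : ∑ q ∈ Finset.Ico (s+1) n, Dent n L a b p q * w n j q = 0 := by
      refine Finset.sum_eq_zero fun q hq => ?_
      simp only [Finset.mem_Ico] at hq
      rw [w_gt n j q (by omega), mul_zero]
    rw [e1, e2, e3, ← Finset.range_eq_Ico]
    ring
  rw [hsplit]
  have hgs : g n L (s - 1) = g n L s + L j / (((s + 1) * s : ℕ) : ℝ) := by
    have := gstep n L (s - 1) (by omega)
    have e1 : s - 1 + 1 = s := by omega
    have e2 : n - (s - 1) = j := by omega
    have e3 : s - 1 + 2 = s + 1 := by omega
    rwa [e1, e2, e3] at this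
  have hoffs : offd n L s = g n L s - L j / (s + 1) := by
    unfold offd
    have : n - s + 1 = j := by omega
    rw [this]
  have hdiags : diagv n L s = g n L s + L j * s / (s + 1) := by
    unfold diagv
    have : n - s + 1 = j := by omega
    rw [this]
  have hs0 : (s : ℝ) ≠ 0 := by positivity
  have hs1 : (s : ℝ) + 1 ≠ 0 := by positivity
  rcases lt_trichotomy p s with hps | rfl | hps
  · rw [PSlt n L a b hn p s hps (by omega) (by omega)]
    have hDps : Dent n L a b p s = offd n L s := by
      have h1 : ¬ (p ≤ 2 ∧ s ≤ 2) := by omega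
      have hne : p ≠ s := by omega
      have hm : max p s = s := by omega
      simp [Dent, h1, hne, hm]
    rw [hDps, w_lt n j p (by omega), hgs, hoffs]
    push_cast
    field_simp
    ring
  · rw [PSge n L a b s s (by omega) le_rfl (by omega)]
    have hDss : Dent n L a b s s = diagv n L s := by
      have h1 : ¬ s ≤ 2 := by omega
      simp [Dent, h1]
    rw [hDss, hws, hoffs, hdiags]
    field_simp
    ring
  · rw [PSge n L a b p s (by omega) (by omega) hp]
    have hDps : Dent n L a b p s = offd n L p := by
      have h1 : ¬ (p ≤ 2 ∧ s ≤ 2) := by omega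
      have hne : p ≠ s := by omega
      have hm : max p s = p := by omega
      simp [Dent, h1, hne, hm]
    rw [hDps, w_gt n j p (by omega)]
    ring

noncomputable def om : ℂ := (-1 + (Real.sqrt 3 : ℂ) * Complex.I) / 2

lemma hr3 : ((Real.sqrt 3 : ℝ) : ℂ) ^ 2 = 3 := by
  have : (Real.sqrt 3 : ℝ) ^ 2 = 3 := Real.sq_sqrt (by norm_num)
  exact_mod_cast congrArg (fun x : ℝ => (x : ℂ)) this

lemma hom_sum : 1 + om + om ^ 2 = 0 := by
  unfold om
  linear_combination (((Real.sqrt 3 : ℝ) : ℂ)^2/4) * Complex.I_sq - (1/4 : ℂ) * hr3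

lemma hom_cube : om ^ 3 = 1 := by
  linear_combination (om - 1) * hom_sum

lemma hom_two : om ^ 2 = (-1 - (Real.sqrt 3 : ℂ) * Complex.I) / 2 := by
  unfold om
  linear_combination (((Real.sqrt 3 : ℝ) : ℂ)^2/4) * Complex.I_sq - (1/4 : ℂ) * hr3

lemma cc0 : cc a b 0 = 2 * a / 3 := by norm_num [cc]
lemma cc1 : cc a b 1 = -(a / 3) + Real.sqrt 3 / 3 * b := by norm_num [cc]
lemma cc2 : cc a b 2 = -(a / 3) - Real.sqrt 3 / 3 * b := by norm_num [cc]

lemma hk1 : ((cc a b 0 : ℝ) : ℂ) + (cc a b 1 : ℝ) * om + (cc a b 2 : ℝ) * om ^ 2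
    = (a : ℂ) + (b : ℂ) * Complex.I := by
  rw [cc0, cc1, cc2, hom_two]
  unfold om
  push_cast
  linear_combination ((b : ℂ)/3 * Complex.I) * hr3

lemma hk2 : ((cc a b 0 : ℝ) : ℂ) + (cc a b 1 : ℝ) * om ^ 2 + (cc a b 2 : ℝ) * (om ^ 2) ^ 2
    = (a : ℂ) - (b : ℂ) * Complex.I := by
  have h4 : (om ^ 2) ^ 2 = om := by
    linear_combination om * hom_cube
  rw [h4, cc0, cc1, cc2, hom_two]
  unfold om
  push_cast
  linear_combination (-(b : ℂ)/3 * Complex.I) * hr3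

lemma homsum2 : 1 + om ^ 2 + (om ^ 2) ^ 2 = 0 := by
  have h4 : (om ^ 2) ^ 2 = om := by linear_combination om * hom_cube
  rw [h4]
  linear_combination hom_sum

lemma hcube2 : (om ^ 2) ^ 3 = 1 := by
  linear_combination (om ^ 3 + 1) * hom_cube

noncomputable def vv (z : ℂ) (p : ℕ) : ℂ := if p ≤ 2 then z ^ p else 0

lemma ceig_core (z mu : ℂ) (hz3 : z ^ 3 = 1) (hzs : 1 + z + z ^ 2 = 0)
    (hk : ((cc a b 0 : ℝ) : ℂ) + (cc a b 1 : ℝ) * z + (cc a b 2 : ℝ) * z ^ 2 = mu)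
    (p : ℕ) (hp : p ≤ 2) :
    ((Dent n L a b p 0 : ℝ) : ℂ) + (Dent n L a b p 1 : ℝ) * z + (Dent n L a b p 2 : ℝ) * z ^ 2
      = mu * z ^ p := by
  interval_cases p <;>
    simp only [Dent, if_pos, and_self, Nat.zero_le, Nat.le_refl, true_and, and_true] <;>
    norm_num <;> push_cast
  · linear_combination ((Squant n L : ℝ) : ℂ) * hzs + hk
  · linear_combination ((Squant n L : ℝ) : ℂ) * hzs + z * hk - ((cc a b 2 : ℝ) : ℂ) * hz3
  · linear_combination ((Squant n L : ℝ) : ℂ) * hzs + z ^ 2 * hk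
      - ((cc a b 1 : ℝ) : ℂ) * hz3 - ((cc a b 2 : ℝ) : ℂ) * z * hz3

lemma ceig (hn : 5 ≤ n) (z mu : ℂ) (hz3 : z ^ 3 = 1) (hzs : 1 + z + z ^ 2 = 0)
    (hk : ((cc a b 0 : ℝ) : ℂ) + (cc a b 1 : ℝ) * z + (cc a b 2 : ℝ) * z ^ 2 = mu)
    (p : ℕ) (hp : p < n) :
    ∑ q ∈ Finset.range n, ((Dent n L a b p q : ℝ) : ℂ) * vv z q = mu * vv z p := by
  have hsplit : ∑ q ∈ Finset.range n, ((Dent n L a b p q : ℝ) : ℂ) * vv z q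
      = ((Dent n L a b p 0 : ℝ) : ℂ) + (Dent n L a b p 1 : ℝ) * z
        + (Dent n L a b p 2 : ℝ) * z ^ 2 := by
    rw [Finset.range_eq_Ico,
      ← Finset.sum_Ico_consecutive _ (by omega : 0 ≤ 3) (by omega : 3 ≤ n)]
    have e3 : ∑ q ∈ Finset.Ico 3 n, ((Dent n L a b p q : ℝ) : ℂ) * vv z q = 0 := by
      refine Finset.sum_eq_zero fun q hq => ?_
      simp only [Finset.mem_Ico] at hq
      have : ¬ q ≤ 2 := by omega
      simp [vv, this]
    rw [e3, add_zero, ← Finset.range_eq_Ico, Finset.sum_range_succ, Finset.sum_range_succ,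
      Finset.sum_range_one]
    simp [vv]
  rw [hsplit]
  rcases le_or_gt p 2 with h2 | h2
  · rw [ceig_core n L a b z mu hz3 hzs hk p h2]
    simp [vv, h2]
  · have hoff : ∀ q, q ≤ 2 → Dent n L a b p q = offd n L p := by
      intro q hq
      have h1 : ¬ (p ≤ 2 ∧ q ≤ 2) := by omega
      have hne : p ≠ q := by omega
      have hm : max p q = p := by omega
      simp [Dent, h1, hne, hm]
    rw [hoff 0 (by omega), hoff 1 (by omega), hoff 2 (by omega)]
    have : ¬ p ≤ 2 := by omega
    simp [vv, this]
    linear_combination ((offd n L p : ℝ) : ℂ) * hzs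

lemma sum_w (j t : ℕ) (hj2 : 2 ≤ j) (hjn : j + 2 ≤ n) (ht : n - j + 1 < t) (htn : t ≤ n) :
    ∑ p ∈ Finset.range t, w n j p = 0 := by
  set s := n - j + 1 with hs
  rw [Finset.range_eq_Ico,
    ← Finset.sum_Ico_consecutive _ (by omega : 0 ≤ s) (by omega : s ≤ t),
    ← Finset.sum_Ico_consecutive _ (by omega : s ≤ s + 1) (by omega : s + 1 ≤ t)]
  have e1 : ∑ p ∈ Finset.Ico 0 s, w n j p = s := by
    rw [Finset.sum_congr rfl fun p hp => w_lt n j p (by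
      simp only [Finset.mem_Ico] at hp; omega), Finset.sum_const]
    simp
  have e2 : ∑ p ∈ Finset.Ico s (s + 1), w n j p = -(s : ℝ) := by
    rw [Finset.sum_Ico_succ_top (by omega), Finset.Ico_self, Finset.sum_empty, zero_add,
      w_eq n j s (by omega)]
  have e3 : ∑ p ∈ Finset.Ico (s + 1) t, w n j p = 0 :=
    Finset.sum_eq_zero fun p hp => w_gt n j p (by
      simp only [Finset.mem_Ico] at hp; omega)
  rw [e1, e2, e3]
  ring

lemma sum_wsq (j : ℕ) (hj2 : 2 ≤ j) (hjn : j + 2 ≤ n) :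
    ∑ p ∈ Finset.range n, w n j p * w n j p = (((n - j + 2) * (n - j + 1) : ℕ) : ℝ) := by
  set s := n - j + 1 with hs
  rw [Finset.range_eq_Ico,
    ← Finset.sum_Ico_consecutive _ (by omega : 0 ≤ s) (by omega : s ≤ n),
    ← Finset.sum_Ico_consecutive _ (by omega : s ≤ s + 1) (by omega : s + 1 ≤ n)]
  have e1 : ∑ p ∈ Finset.Ico 0 s, w n j p * w n j p = s := by
    rw [Finset.sum_congr rfl fun p hp => by
      rw [w_lt n j p (by simp only [Finset.mem_Ico] at hp; omega), mul_one], Finset.sum_const]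
    simp
  have e2 : ∑ p ∈ Finset.Ico s (s + 1), w n j p * w n j p = (s : ℝ) * s := by
    rw [Finset.sum_Ico_succ_top (by omega), Finset.Ico_self, Finset.sum_empty, zero_add,
      w_eq n j s (by omega)]
    have : n - j + 1 = s := by omega
    rw [this]
    ring
  have e3 : ∑ p ∈ Finset.Ico (s + 1) n, w n j p * w n j p = 0 :=
    Finset.sum_eq_zero fun p hp => by
      rw [w_gt n j p (by simp only [Finset.mem_Ico] at hp; omega), mul_zero]
  rw [e1, e2, e3]
  have : (n - j + 2) * (n - j + 1) = (s + 1) * s := by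
    have h1 : n - j + 2 = s + 1 := by omega
    have h2 : n - j + 1 = s := by omega
    rw [h1, h2]
  rw [this]
  push_cast
  ring

lemma dot_ww_ne (j k : ℕ) (hj2 : 2 ≤ j) (hjn : j + 2 ≤ n) (hk2 : 2 ≤ k) (hkn : k + 2 ≤ n)
    (hjk : j < k) : ∑ p ∈ Finset.range n, w n j p * w n k p = 0 := by
  have hpt : ∀ p, w n j p * w n k p = w n k p := by
    intro p
    rcases le_or_gt (p + k) n with h | h
    · rw [w_lt n j p (by omega), one_mul]
    · rcases eq_or_ne (p + k) (n + 1) with h1 | h1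
      · rw [w_lt n j p (by omega), one_mul]
      · rw [w_gt n k p (by omega), mul_zero]
  rw [Finset.sum_congr rfl fun p _ => hpt p]
  exact sum_w n k n hk2 hkn (by omega) le_rfl

lemma dot_w_vv (j : ℕ) (hj2 : 2 ≤ j) (hjn : j + 2 ≤ n) (hn : 5 ≤ n) (z : ℂ) :
    ∑ p ∈ Finset.range n, ((w n j p : ℝ) : ℂ) * vv z p = 1 + z + z ^ 2 := by
  rw [Finset.range_eq_Ico,
    ← Finset.sum_Ico_consecutive _ (by omega : 0 ≤ 3) (by omega : 3 ≤ n)]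
  have e3 : ∑ p ∈ Finset.Ico 3 n, ((w n j p : ℝ) : ℂ) * vv z p = 0 :=
    Finset.sum_eq_zero fun p hp => by
      have : ¬ p ≤ 2 := by simp only [Finset.mem_Ico] at hp; omega
      simp [vv, this]
  rw [e3, add_zero, ← Finset.range_eq_Ico, Finset.sum_range_succ, Finset.sum_range_succ,
    Finset.sum_range_one, w_lt n j 0 (by omega), w_lt n j 1 (by omega), w_lt n j 2 (by omega)]
  simp [vv]

lemma dot_one_vv (hn : 5 ≤ n) (z : ℂ) :
    ∑ p ∈ Finset.range n, vv z p = 1 + z + z ^ 2 := by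
  rw [Finset.range_eq_Ico,
    ← Finset.sum_Ico_consecutive _ (by omega : 0 ≤ 3) (by omega : 3 ≤ n)]
  have e3 : ∑ p ∈ Finset.Ico 3 n, vv z p = 0 :=
    Finset.sum_eq_zero fun p hp => by
      have : ¬ p ≤ 2 := by simp only [Finset.mem_Ico] at hp; omega
      simp [vv, this]
  rw [e3, add_zero, ← Finset.range_eq_Ico, Finset.sum_range_succ, Finset.sum_range_succ,
    Finset.sum_range_one]
  simp [vv]

lemma dot_vv_vv (hn : 5 ≤ n) (y z : ℂ) :
    ∑ p ∈ Finset.range n, vv y p * vv z p = 1 + y * z + y ^ 2 * z ^ 2 := by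
  rw [Finset.range_eq_Ico,
    ← Finset.sum_Ico_consecutive _ (by omega : 0 ≤ 3) (by omega : 3 ≤ n)]
  have e3 : ∑ p ∈ Finset.Ico 3 n, vv y p * vv z p = 0 :=
    Finset.sum_eq_zero fun p hp => by
      have : ¬ p ≤ 2 := by simp only [Finset.mem_Ico] at hp; omega
      simp [vv, this]
  rw [e3, add_zero, ← Finset.range_eq_Ico, Finset.sum_range_succ, Finset.sum_range_succ,
    Finset.sum_range_one]
  simp [vv]

noncomputable def colV (i p : ℕ) : ℂ :=
  if i = 0 then 1 else if i ≤ n - 3 then ((w n (i + 1) p : ℝ) : ℂ)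
  else if i = n - 2 then vv om p else vv (om ^ 2) p

noncomputable def rowU (i p : ℕ) : ℂ :=
  if i = 0 then 1 / (n : ℂ)
  else if i ≤ n - 3 then ((w n (i + 1) p : ℝ) : ℂ) / ((((n - i + 1) * (n - i) : ℕ)) : ℂ)
  else if i = n - 2 then vv (om ^ 2) p / 3 else vv om p / 3

noncomputable def mun (i : ℕ) : ℂ :=
  if i = 0 then 1 else if i ≤ n - 3 then ((L (i + 1) : ℝ) : ℂ)
  else if i = n - 2 then (a : ℂ) + (b : ℂ) * Complex.I else (a : ℂ) - (b : ℂ) * Complex.I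

lemma csum_w (j : ℕ) (hj2 : 2 ≤ j) (hjn : j + 2 ≤ n) :
    ∑ p ∈ Finset.range n, ((w n j p : ℝ) : ℂ) = 0 := by
  have := sum_w n j n hj2 hjn (by omega) le_rfl
  exact_mod_cast congrArg (fun x : ℝ => (x : ℂ)) this

lemma csum_ww (j k : ℕ) (hj2 : 2 ≤ j) (hjn : j + 2 ≤ n) (hk2 : 2 ≤ k) (hkn : k + 2 ≤ n)
    (hjk : j ≠ k) :
    ∑ p ∈ Finset.range n, ((w n j p : ℝ) : ℂ) * ((w n k p : ℝ) : ℂ) = 0 := by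
  have : ∑ p ∈ Finset.range n, w n j p * w n k p = 0 := by
    rcases lt_or_gt_of_ne hjk with h | h
    · exact dot_ww_ne n j k hj2 hjn hk2 hkn h
    · rw [Finset.sum_congr rfl fun p _ => mul_comm (w n j p) (w n k p)]
      exact dot_ww_ne n k j hk2 hkn hj2 hjn h
  exact_mod_cast congrArg (fun x : ℝ => (x : ℂ)) this

lemma csum_wsq (j : ℕ) (hj2 : 2 ≤ j) (hjn : j + 2 ≤ n) :
    ∑ p ∈ Finset.range n, ((w n j p : ℝ) : ℂ) * ((w n j p : ℝ) : ℂ)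
      = (((n - j + 2) * (n - j + 1) : ℕ) : ℂ) := by
  have := sum_wsq n j hj2 hjn
  exact_mod_cast congrArg (fun x : ℝ => (x : ℂ)) this

lemma hvv33 : 1 + om ^ 2 * om + (om ^ 2) ^ 2 * om ^ 2 = 3 := by
  linear_combination (om ^ 3 + 2) * hom_cube

lemma hvv33' : 1 + om * om ^ 2 + om ^ 2 * (om ^ 2) ^ 2 = 3 := by
  linear_combination (om ^ 3 + 2) * hom_cube

lemma hvv22 : 1 + om * om + om ^ 2 * om ^ 2 = 0 := by
  linear_combination hom_sum + om * hom_cube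

lemma hvv44 : 1 + om ^ 2 * om ^ 2 + (om ^ 2) ^ 2 * (om ^ 2) ^ 2 = 0 := by
  linear_combination hom_sum + om * hom_cube + om ^ 2 * (om ^ 3 + 1) * hom_cube

lemma UVentry (hn : 5 ≤ n) (i i' : ℕ) (hi : i < n) (hi' : i' < n) :
    ∑ p ∈ Finset.range n, rowU n i p * colV n i' p = if i = i' then 1 else 0 := by
  have hn0 : (n : ℂ) ≠ 0 := by exact_mod_cast (by omega : n ≠ 0)
  have hclass : ∀ m, m < n → m = 0 ∨ (1 ≤ m ∧ m ≤ n - 3) ∨ m = n - 2 ∨ m = n - 1 := by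
    intro m hm; omega
  -- rewriting helpers
  have hU0 : ∀ p, rowU n 0 p = 1 / (n : ℂ) := fun p => by simp [rowU]
  have hUB : ∀ m, 1 ≤ m → m ≤ n - 3 → ∀ p,
      rowU n m p = ((w n (m + 1) p : ℝ) : ℂ) / ((((n - m + 1) * (n - m) : ℕ)) : ℂ) := by
    intro m h1 h2 p
    have e0 : m ≠ 0 := by omega
    simp [rowU, e0, h2]
  have hUC : ∀ p, rowU n (n - 2) p = vv (om ^ 2) p / 3 := by
    intro p
    have e0 : n - 2 ≠ 0 := by omega
    have e1 : ¬ (n - 2 ≤ n - 3) := by omega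
    simp [rowU, e0, e1]
  have hUD : ∀ p, rowU n (n - 1) p = vv om p / 3 := by
    intro p
    have e0 : n - 1 ≠ 0 := by omega
    have e1 : ¬ (n - 1 ≤ n - 3) := by omega
    have e2 : n - 1 ≠ n - 2 := by omega
    simp [rowU, e0, e1, e2]
  have hV0 : ∀ p, colV n 0 p = 1 := fun p => by simp [colV]
  have hVB : ∀ m, 1 ≤ m → m ≤ n - 3 → ∀ p, colV n m p = ((w n (m + 1) p : ℝ) : ℂ) := by
    intro m h1 h2 p
    have e0 : m ≠ 0 := by omega
    simp [colV, e0, h2]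
  have hVC : ∀ p, colV n (n - 2) p = vv om p := by
    intro p
    have e0 : n - 2 ≠ 0 := by omega
    have e1 : ¬ (n - 2 ≤ n - 3) := by omega
    simp [colV, e0, e1]
  have hVD : ∀ p, colV n (n - 1) p = vv (om ^ 2) p := by
    intro p
    have e0 : n - 1 ≠ 0 := by omega
    have e1 : ¬ (n - 1 ≤ n - 3) := by omega
    have e2 : n - 1 ≠ n - 2 := by omega
    simp [colV, e0, e1, e2]
  rcases hclass i hi with hiA | ⟨hiB1, hiB2⟩ | hiC | hiD
  · subst hiA
    simp only [hU0]
    rcases hclass i' hi' with h'A | ⟨h'B1, h'B2⟩ | h'C | h'D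
    · subst h'A
      simp only [hV0, if_pos rfl]
      rw [Finset.sum_const, Finset.card_range]
      simp [nsmul_eq_mul, hn0]
    · simp only [hVB i' h'B1 h'B2]
      rw [← Finset.mul_sum, csum_w n (i' + 1) (by omega) (by omega), mul_zero,
        if_neg (by omega : (0:ℕ) ≠ i')]
    · subst h'C
      simp only [hVC]
      rw [← Finset.mul_sum, dot_one_vv n hn om, hom_sum, mul_zero,
        if_neg (by omega : (0:ℕ) ≠ n - 2)]
    · subst h'D
      simp only [hVD]
      rw [← Finset.mul_sum, dot_one_vv n hn (om ^ 2), homsum2, mul_zero,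
        if_neg (by omega : (0:ℕ) ≠ n - 1)]
  · simp only [hUB i hiB1 hiB2]
    have hN0 : ((((n - i + 1) * (n - i) : ℕ)) : ℂ) ≠ 0 := by
      exact_mod_cast (by
        have : 2 ≤ n - i := by omega
        positivity)
    rcases hclass i' hi' with h'A | ⟨h'B1, h'B2⟩ | h'C | h'D
    · subst h'A
      simp only [hV0]
      have : ∀ p, ((w n (i + 1) p : ℝ) : ℂ) / ((((n - i + 1) * (n - i) : ℕ)) : ℂ) * 1
          = (1 / ((((n - i + 1) * (n - i) : ℕ)) : ℂ)) * ((w n (i + 1) p : ℝ) : ℂ) := by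
        intro p; ring
      rw [Finset.sum_congr rfl fun p _ => this p, ← Finset.mul_sum,
        csum_w n (i + 1) (by omega) (by omega), mul_zero, if_neg (by omega : i ≠ 0)]
    · simp only [hVB i' h'B1 h'B2]
      rcases eq_or_ne i i' with rfl | hne
      · rw [if_pos rfl]
        have : ∀ p, ((w n (i + 1) p : ℝ) : ℂ) / ((((n - i + 1) * (n - i) : ℕ)) : ℂ)
              * ((w n (i + 1) p : ℝ) : ℂ)
            = (1 / ((((n - i + 1) * (n - i) : ℕ)) : ℂ))
              * (((w n (i + 1) p : ℝ) : ℂ) * ((w n (i + 1) p : ℝ) : ℂ)) := by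
          intro p; ring
        rw [Finset.sum_congr rfl fun p _ => this p, ← Finset.mul_sum,
          csum_wsq n (i + 1) (by omega) (by omega)]
        have e : (n - (i + 1) + 2) * (n - (i + 1) + 1) = (n - i + 1) * (n - i) := by
          have e1 : n - (i + 1) + 2 = n - i + 1 := by omega
          have e2 : n - (i + 1) + 1 = n - i := by omega
          rw [e1, e2]
        rw [e]
        rw [one_div, inv_mul_cancel₀ hN0]
      · rw [if_neg hne]
        have : ∀ p, ((w n (i + 1) p : ℝ) : ℂ) / ((((n - i + 1) * (n - i) : ℕ)) : ℂ)
              * ((w n (i' + 1) p : ℝ) : ℂ)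
            = (1 / ((((n - i + 1) * (n - i) : ℕ)) : ℂ))
              * (((w n (i + 1) p : ℝ) : ℂ) * ((w n (i' + 1) p : ℝ) : ℂ)) := by
          intro p; ring
        rw [Finset.sum_congr rfl fun p _ => this p, ← Finset.mul_sum,
          csum_ww n (i + 1) (i' + 1) (by omega) (by omega) (by omega) (by omega)
            (by omega), mul_zero]
    · subst h'C
      simp only [hVC]
      have : ∀ p, ((w n (i + 1) p : ℝ) : ℂ) / ((((n - i + 1) * (n - i) : ℕ)) : ℂ) * vv om p
          = (1 / ((((n - i + 1) * (n - i) : ℕ)) : ℂ)) * (((w n (i + 1) p : ℝ) : ℂ) * vv om p) := by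
        intro p; ring
      rw [Finset.sum_congr rfl fun p _ => this p, ← Finset.mul_sum,
        dot_w_vv n (i + 1) (by omega) (by omega) hn om, hom_sum, mul_zero,
        if_neg (by omega : i ≠ n - 2)]
    · subst h'D
      simp only [hVD]
      have : ∀ p, ((w n (i + 1) p : ℝ) : ℂ) / ((((n - i + 1) * (n - i) : ℕ)) : ℂ) * vv (om ^ 2) p
          = (1 / ((((n - i + 1) * (n - i) : ℕ)) : ℂ))
            * (((w n (i + 1) p : ℝ) : ℂ) * vv (om ^ 2) p) := by
        intro p; ring
      rw [Finset.sum_congr rfl fun p _ => this p, ← Finset.mul_sum,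
        dot_w_vv n (i + 1) (by omega) (by omega) hn (om ^ 2), homsum2, mul_zero,
        if_neg (by omega : i ≠ n - 1)]
  · subst hiC
    simp only [hUC]
    rcases hclass i' hi' with h'A | ⟨h'B1, h'B2⟩ | h'C | h'D
    · subst h'A
      simp only [hV0]
      have : ∀ p, vv (om ^ 2) p / 3 * 1 = (1/3 : ℂ) * vv (om ^ 2) p := by intro p; ring
      rw [Finset.sum_congr rfl fun p _ => this p, ← Finset.mul_sum, dot_one_vv n hn (om ^ 2),
        homsum2, mul_zero, if_neg (by omega : n - 2 ≠ 0)]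
    · simp only [hVB i' h'B1 h'B2]
      have : ∀ p, vv (om ^ 2) p / 3 * ((w n (i' + 1) p : ℝ) : ℂ)
          = (1/3 : ℂ) * (((w n (i' + 1) p : ℝ) : ℂ) * vv (om ^ 2) p) := by intro p; ring
      rw [Finset.sum_congr rfl fun p _ => this p, ← Finset.mul_sum,
        dot_w_vv n (i' + 1) (by omega) (by omega) hn (om ^ 2), homsum2, mul_zero,
        if_neg (by omega : n - 2 ≠ i')]
    · subst h'C
      simp only [hVC, if_pos rfl]
      have : ∀ p, vv (om ^ 2) p / 3 * vv om p = (1/3 : ℂ) * (vv (om ^ 2) p * vv om p) := by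
        intro p; ring
      rw [Finset.sum_congr rfl fun p _ => this p, ← Finset.mul_sum,
        dot_vv_vv n hn (om ^ 2) om, hvv33]
      norm_num
    · subst h'D
      simp only [hVD]
      have : ∀ p, vv (om ^ 2) p / 3 * vv (om ^ 2) p
          = (1/3 : ℂ) * (vv (om ^ 2) p * vv (om ^ 2) p) := by intro p; ring
      rw [Finset.sum_congr rfl fun p _ => this p, ← Finset.mul_sum,
        dot_vv_vv n hn (om ^ 2) (om ^ 2), hvv44, mul_zero, if_neg (by omega : n - 2 ≠ n - 1)]
  · subst hiD
    simp only [hUD]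
    rcases hclass i' hi' with h'A | ⟨h'B1, h'B2⟩ | h'C | h'D
    · subst h'A
      simp only [hV0]
      have : ∀ p, vv om p / 3 * 1 = (1/3 : ℂ) * vv om p := by intro p; ring
      rw [Finset.sum_congr rfl fun p _ => this p, ← Finset.mul_sum, dot_one_vv n hn om,
        hom_sum, mul_zero, if_neg (by omega : n - 1 ≠ 0)]
    · simp only [hVB i' h'B1 h'B2]
      have : ∀ p, vv om p / 3 * ((w n (i' + 1) p : ℝ) : ℂ)
          = (1/3 : ℂ) * (((w n (i' + 1) p : ℝ) : ℂ) * vv om p) := by intro p; ring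
      rw [Finset.sum_congr rfl fun p _ => this p, ← Finset.mul_sum,
        dot_w_vv n (i' + 1) (by omega) (by omega) hn om, hom_sum, mul_zero,
        if_neg (by omega : n - 1 ≠ i')]
    · subst h'C
      simp only [hVC]
      have : ∀ p, vv om p / 3 * vv om p = (1/3 : ℂ) * (vv om p * vv om p) := by intro p; ring
      rw [Finset.sum_congr rfl fun p _ => this p, ← Finset.mul_sum,
        dot_vv_vv n hn om om, hvv22, mul_zero, if_neg (by omega : n - 1 ≠ n - 2)]
    · subst h'D
      simp only [hVD, if_pos rfl]
      have : ∀ p, vv om p / 3 * vv (om ^ 2) p = (1/3 : ℂ) * (vv om p * vv (om ^ 2) p) := by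
        intro p; ring
      rw [Finset.sum_congr rfl fun p _ => this p, ← Finset.mul_sum,
        dot_vv_vv n hn om (om ^ 2), hvv33']
      norm_num

lemma DVentry (hn : 5 ≤ n) (p i : ℕ) (hp : p < n) (hi : i < n) :
    ∑ q ∈ Finset.range n, ((Dent n L a b p q : ℝ) : ℂ) * colV n i q
      = mun n L a b i * colV n i p := by
  have hclass : i = 0 ∨ (1 ≤ i ∧ i ≤ n - 3) ∨ i = n - 2 ∨ i = n - 1 := by omega
  rcases hclass with hA | ⟨hB1, hB2⟩ | hC | hD
  · subst hA
    simp only [colV, mun, eq_self_iff_true, if_true, mul_one]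
    have : ∑ q ∈ Finset.range n, ((Dent n L a b p q : ℝ) : ℂ)
        = ((∑ q ∈ Finset.range n, Dent n L a b p q : ℝ) : ℂ) := by push_cast; rfl
    rw [this, rowsum n L a b hn p hp]
    norm_num
  · have e0 : i ≠ 0 := by omega
    simp only [colV, mun, if_neg e0, if_pos hB2]
    have := eigen_real n L a b hn (i + 1) (by omega) (by omega) p hp
    calc ∑ q ∈ Finset.range n, ((Dent n L a b p q : ℝ) : ℂ) * ((w n (i + 1) q : ℝ) : ℂ)
        = ((∑ q ∈ Finset.range n, Dent n L a b p q * w n (i + 1) q : ℝ) : ℂ) := by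
          push_cast; rfl
      _ = ((L (i + 1) * w n (i + 1) p : ℝ) : ℂ) := by rw [this]
      _ = _ := by push_cast; rfl
  · subst hC
    have e0 : n - 2 ≠ 0 := by omega
    have e1 : ¬ (n - 2 ≤ n - 3) := by omega
    simp only [colV, mun, if_neg e0, if_neg e1, eq_self_iff_true, if_true]
    exact ceig n L a b hn om ((a : ℂ) + (b : ℂ) * Complex.I) hom_cube hom_sum (hk1 a b) p hp
  · subst hD
    have e0 : n - 1 ≠ 0 := by omega
    have e1 : ¬ (n - 1 ≤ n - 3) := by omega
    have e2 : n - 1 ≠ n - 2 := by omega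
    simp only [colV, mun, if_neg e0, if_neg e1, if_neg e2]
    exact ceig n L a b hn (om ^ 2) ((a : ℂ) - (b : ℂ) * Complex.I) hcube2 homsum2 (hk2 a b) p hp

lemma charm_diag (d : Fin n → ℂ) :
    charmatrix (Matrix.diagonal d) = Matrix.diagonal fun i => (X : ℂ[X]) - C (d i) := by
  ext i j
  rcases eq_or_ne i j with rfl | h
  · simp
  · rw [charmatrix_apply_ne _ _ _ h, Matrix.diagonal_apply_ne _ h, Matrix.diagonal_apply_ne _ h]
    simp

end DiepAux

open DiepAux in
theorem diep_complex' (n : ℕ) (hn : 5 ≤ n) (L : ℕ → ℝ) (a b : ℝ)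
    (hub : L 2 ≤ 1)
    (hdec : ∀ j, 2 ≤ j → j < n - 2 → L (j + 1) ≤ L j)
    (hlb : -1 ≤ L (n - 2))
    (hab : a ^ 2 + b ^ 2 ≤ 1)
    (htr : 0 ≤ 1 + (∑ j ∈ Finset.Icc 2 (n - 2), L j) + 2 * a)
    (hc1 : 0 ≤ Squant n L + 2 * a / 3)
    (hc2 : 0 ≤ Squant n L - a / 3 - Real.sqrt 3 / 3 * b)
    (hc3 : 0 ≤ Squant n L - a / 3 + Real.sqrt 3 / 3 * b)
    (hc4 : 0 ≤ 1 / (n : ℝ) +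
        (∑ j ∈ Finset.Icc 2 (n - 3), L j / (((n - j + 2) * (n - j + 1) : ℕ) : ℝ)) +
        3 * L (n - 2) / 4) :
    ∃ D : Matrix (Fin n) (Fin n) ℝ,
      ((∀ i j, 0 ≤ D i j) ∧ (∀ i, ∑ j, D i j = 1) ∧ (∀ j, ∑ i, D i j = 1)) ∧
      D.charpoly.map (algebraMap ℝ ℂ) =
        (X - C 1) * (∏ j ∈ Finset.Icc 2 (n - 2), (X - C ((L j : ℂ)))) *
          (X - C ((a : ℂ) + (b : ℂ) * Complex.I)) *
          (X - C ((a : ℂ) - (b : ℂ) * Complex.I)) := by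
  refine ⟨Matrix.of fun p q : Fin n => Dent n L a b p.val q.val, ⟨?_, ?_, ?_⟩, ?_⟩
  · intro i j
    exact Dent_nonneg n L a b hn hub hdec hc1 hc2 hc3 hc4 i.val j.val i.isLt j.isLt
  · intro i
    simp only [Matrix.of_apply]
    rw [Fin.sum_univ_eq_sum_range (fun q => Dent n L a b i.val q) n]
    exact rowsum n L a b hn i.val i.isLt
  · intro j
    simp only [Matrix.of_apply]
    rw [Fin.sum_univ_eq_sum_range (fun p => Dent n L a b p j.val) n]
    exact colsum n L a b hn j.val j.isLt
  · -- the spectral part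
    set D : Matrix (Fin n) (Fin n) ℝ := Matrix.of fun p q : Fin n => Dent n L a b p.val q.val
      with hD
    set V : Matrix (Fin n) (Fin n) ℂ := Matrix.of fun p i : Fin n => colV n i.val p.val with hV
    set U : Matrix (Fin n) (Fin n) ℂ := Matrix.of fun i p : Fin n => rowU n i.val p.val with hU
    set Dg : Matrix (Fin n) (Fin n) ℂ :=
      Matrix.diagonal fun i : Fin n => mun n L a b i.val with hDg
    have hUV : U * V = 1 := by
      ext i i'
      rw [Matrix.mul_apply]
      have : ∀ p : Fin n, U i p * V p i' = rowU n i.val p.val * colV n i'.val p.val :=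
        fun p => rfl
      rw [Finset.sum_congr rfl fun p _ => this p,
        Fin.sum_univ_eq_sum_range (fun p => rowU n i.val p * colV n i'.val p) n,
        UVentry n hn i.val i'.val i.isLt i'.isLt]
      rcases eq_or_ne i i' with rfl | h
      · simp
      · rw [if_neg (fun hc => h (Fin.ext hc)), Matrix.one_apply_ne h]
    have hDV : D.map (algebraMap ℝ ℂ) * V = V * Dg := by
      ext p i
      rw [Matrix.mul_apply, Matrix.mul_diagonal]
      have : ∀ q : Fin n, (D.map (algebraMap ℝ ℂ)) p q * V q i
          = ((Dent n L a b p.val q.val : ℝ) : ℂ) * colV n i.val q.val := fun q => rfl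
      rw [Finset.sum_congr rfl fun q _ => this q,
        Fin.sum_univ_eq_sum_range
          (fun q => ((Dent n L a b p.val q : ℝ) : ℂ) * colV n i.val q) n,
        DVentry n L a b hn p.val i.val p.isLt i.isLt]
      exact mul_comm _ _
    have hVU : V * U = 1 := mul_eq_one_comm.mp hUV
    have hVpUp : V.map (C : ℂ →+* ℂ[X]) * U.map (C : ℂ →+* ℂ[X]) = 1 := by
      rw [← Matrix.map_mul, hVU, Matrix.map_one _ (map_zero C) (map_one C)]
    have hcomm : charmatrix (D.map (algebraMap ℝ ℂ)) * V.map (C : ℂ →+* ℂ[X])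
        = V.map (C : ℂ →+* ℂ[X]) * charmatrix Dg := by
      unfold charmatrix
      rw [Matrix.sub_mul, Matrix.mul_sub, RingHom.mapMatrix_apply, RingHom.mapMatrix_apply,
        ← Matrix.map_mul, hDV, Matrix.map_mul]
      congr 1
      exact (Matrix.scalar_commute (X : ℂ[X]) (Commute.all X) (V.map C)).eq
    have hdet1 : (V.map (C : ℂ →+* ℂ[X])).det * (U.map (C : ℂ →+* ℂ[X])).det = 1 := by
      rw [← Matrix.det_mul, hVpUp, Matrix.det_one]
    have hdeteq : (charmatrix (D.map (algebraMap ℝ ℂ))).det * (V.map (C : ℂ →+* ℂ[X])).det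
        = (V.map (C : ℂ →+* ℂ[X])).det * (charmatrix Dg).det := by
      rw [← Matrix.det_mul, ← Matrix.det_mul, hcomm]
    have hchar : (D.map (algebraMap ℝ ℂ)).charpoly = (charmatrix Dg).det := by
      unfold Matrix.charpoly
      calc (charmatrix (D.map (algebraMap ℝ ℂ))).det
          = (charmatrix (D.map (algebraMap ℝ ℂ))).det
            * ((V.map (C : ℂ →+* ℂ[X])).det * (U.map (C : ℂ →+* ℂ[X])).det) := by
            rw [hdet1, mul_one]
        _ = ((charmatrix (D.map (algebraMap ℝ ℂ))).det * (V.map (C : ℂ →+* ℂ[X])).det)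
            * (U.map (C : ℂ →+* ℂ[X])).det := by ring
        _ = ((V.map (C : ℂ →+* ℂ[X])).det * (charmatrix Dg).det)
            * (U.map (C : ℂ →+* ℂ[X])).det := by rw [hdeteq]
        _ = (charmatrix Dg).det
            * ((V.map (C : ℂ →+* ℂ[X])).det * (U.map (C : ℂ →+* ℂ[X])).det) := by ring
        _ = (charmatrix Dg).det := by rw [hdet1, mul_one]
    have hdiagdet : (charmatrix Dg).det = ∏ i : Fin n, ((X : ℂ[X]) - C (mun n L a b i.val)) := by
      rw [hDg, charm_diag n, Matrix.det_diagonal]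
    rw [← Matrix.charpoly_map D (algebraMap ℝ ℂ), hchar, hdiagdet]
    -- now compute the product
    rw [Fin.prod_univ_eq_prod_range (fun m => (X : ℂ[X]) - C (mun n L a b m)) n]
    have e1 : n - 1 + 1 = n := by omega
    have e2 : n - 2 + 1 = n - 1 := by omega
    have p1 : ∏ m ∈ Finset.range n, ((X : ℂ[X]) - C (mun n L a b m))
        = (∏ m ∈ Finset.range (n - 1), ((X : ℂ[X]) - C (mun n L a b m)))
          * ((X : ℂ[X]) - C (mun n L a b (n - 1))) := by
      have h := Finset.prod_range_succ (fun m => (X : ℂ[X]) - C (mun n L a b m)) (n - 1)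
      rw [e1] at h
      exact h
    have p2 : ∏ m ∈ Finset.range (n - 1), ((X : ℂ[X]) - C (mun n L a b m))
        = (∏ m ∈ Finset.range (n - 2), ((X : ℂ[X]) - C (mun n L a b m)))
          * ((X : ℂ[X]) - C (mun n L a b (n - 2))) := by
      have h := Finset.prod_range_succ (fun m => (X : ℂ[X]) - C (mun n L a b m)) (n - 2)
      rw [e2] at h
      exact h
    have p3 : ∏ m ∈ Finset.range (n - 2), ((X : ℂ[X]) - C (mun n L a b m))
        = ((X : ℂ[X]) - C (mun n L a b 0))
          * ∏ m ∈ Finset.Ico 1 (n - 2), ((X : ℂ[X]) - C (mun n L a b m)) := by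
      rw [Finset.range_eq_Ico, Finset.prod_eq_prod_Ico_succ_bot (by omega : 0 < n - 2)]
    have pmid : ∏ m ∈ Finset.Ico 1 (n - 2), ((X : ℂ[X]) - C (mun n L a b m))
        = ∏ j ∈ Finset.Icc 2 (n - 2), ((X : ℂ[X]) - C ((L j : ℝ) : ℂ)) := by
      have hIcc : Finset.Icc 2 (n - 2) = Finset.Ico 2 (n - 1) := by
        rw [← Finset.Ico_add_one_right_eq_Icc, e2]
      rw [hIcc, Finset.prod_Ico_eq_prod_range, Finset.prod_Ico_eq_prod_range]
      have elen : n - 2 - 1 = n - 1 - 2 := by omega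
      rw [elen]
      refine Finset.prod_congr rfl fun m hm => ?_
      simp only [Finset.mem_range] at hm
      have h0 : 1 + m ≠ 0 := by omega
      have h3 : 1 + m ≤ n - 3 := by omega
      have : mun n L a b (1 + m) = ((L (1 + m + 1) : ℝ) : ℂ) := by
        simp [mun, h0, h3]
      rw [this]
      have : 1 + m + 1 = 2 + m := by omega
      rw [this]
    have hm0 : mun n L a b 0 = 1 := by simp [mun]
    have hmC : mun n L a b (n - 2) = (a : ℂ) + (b : ℂ) * Complex.I := by
      have h0 : n - 2 ≠ 0 := by omega
      have h3 : ¬ (n - 2 ≤ n - 3) := by omega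
      simp [mun, h0, h3]
    have hmD : mun n L a b (n - 1) = (a : ℂ) - (b : ℂ) * Complex.I := by
      have h0 : n - 1 ≠ 0 := by omega
      have h3 : ¬ (n - 1 ≤ n - 3) := by omega
      have h2 : n - 1 ≠ n - 2 := by omega
      simp [mun, h0, h3, h2]
    rw [p1, p2, p3, pmid, hm0, hmC, hmD]

/-- For `n ≥ 5`, real `1 ≥ λ₂ ≥ ⋯ ≥ λ_{n-2} ≥ -1` and `a, b` with `a² + b² ≤ 1` and
`1 + λ₂ + ⋯ + λ_{n-2} + 2a ≥ 0`: if `S + 2a/3 ≥ 0`, `S - a/3 - (√3/3)b ≥ 0`,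
`S - a/3 + (√3/3)b ≥ 0`, and `1/n + ∑_{j=2}^{n-3} λⱼ/((n-j+2)(n-j+1)) + 3λ_{n-2}/4 ≥ 0`,
then `1, λ₂, …, λ_{n-2}, a + ib, a - ib` is the spectrum of an `n × n` doubly stochastic
matrix. -/
theorem diep_complex (n : ℕ) (hn : 5 ≤ n) (L : ℕ → ℝ) (a b : ℝ)
    (hub : L 2 ≤ 1)
    (hdec : ∀ j, 2 ≤ j → j < n - 2 → L (j + 1) ≤ L j)
    (hlb : -1 ≤ L (n - 2))
    (hab : a ^ 2 + b ^ 2 ≤ 1)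
    (htr : 0 ≤ 1 + (∑ j ∈ Finset.Icc 2 (n - 2), L j) + 2 * a)
    (hc1 : 0 ≤ Squant n L + 2 * a / 3)
    (hc2 : 0 ≤ Squant n L - a / 3 - Real.sqrt 3 / 3 * b)
    (hc3 : 0 ≤ Squant n L - a / 3 + Real.sqrt 3 / 3 * b)
    (hc4 : 0 ≤ 1 / (n : ℝ) +
        (∑ j ∈ Finset.Icc 2 (n - 3), L j / (((n - j + 2) * (n - j + 1) : ℕ) : ℝ)) +
        3 * L (n - 2) / 4) :
    ∃ D : Matrix (Fin n) (Fin n) ℝ, DoublyStochastic D ∧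
      D.charpoly.map (algebraMap ℝ ℂ) =
        (X - C 1) * (∏ j ∈ Finset.Icc 2 (n - 2), (X - C ((L j : ℂ)))) *
          (X - C ((a : ℂ) + (b : ℂ) * Complex.I)) *
          (X - C ((a : ℂ) - (b : ℂ) * Complex.I)) := by
  obtain ⟨D, hds, hcp⟩ := diep_complex' n hn L a b hub hdec hlb hab htr hc1 hc2 hc3 hc4
  exact ⟨D, hds, hcp⟩
end
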